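/- arXiv:1308.4822 — 5 statements merged into one kernel-verified Lean document; each statement's English description precedes it below -/
import Mathlib

section
/- (Filter and ideal elements) Let L be a bounded lattice, X = D♭(L), and φ ∈ C(X) = MPE(X,2). Then the following are equivalent: (1) φ is a filter element of C(X); (2) φ⁻¹(1) = ⋂{W_b : b ∈ K} for some K ⊆ L; (3) φ⁻¹(1) is a τ-closed subset of MPH(L,2_B). Dually, the following are equivalent: (1') φ is an ideal element of C(X); (2') φ⁻¹(0) = ⋂{V_a : a ∈ M} for some M ⊆ L; (3') φ⁻¹(0) is a τ-closed subset of MPH(L,2_B). -/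
namespace CanExt

open Classical

/-- A partial map from `X` into the two-element chain `{0,1}` (encoded as `Bool`,
with `false` playing the role of `0` and `true` the role of `1`);
`φ x = none` means `x` is outside the domain of `φ`. -/
abbrev PMap (X : Type*) := X → Option Bool

/-- The preimage of `1` of a partial map. -/
def pre1 {X : Type*} (φ : PMap X) : Set X := {x | φ x = some true}

/-- The preimage of `0` of a partial map. -/
def pre0 {X : Type*} (φ : PMap X) : Set X := {x | φ x = some false}

/-- A partial map is `E`-preserving if whenever `x, y` lie in its domain and
`(x,y) ∈ E`, then `φ x ≤ φ y`. -/
def EPres {X : Type*} (E : X → X → Prop) (φ : PMap X) : Prop :=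
  ∀ ⦃x y : X⦄, E x y → ∀ ⦃a b : Bool⦄, φ x = some a → φ y = some b → a ≤ b

/-- `PExt ψ φ` : the partial map `ψ` extends the partial map `φ`. -/
def PExt {X : Type*} (ψ φ : PMap X) : Prop :=
  ∀ ⦃x : X⦄ ⦃a : Bool⦄, φ x = some a → ψ x = some a

/-- The set of maximal partial `E`-preserving maps from `(X,E)` into the
two-element chain `2`. -/
def MPE {X : Type*} (E : X → X → Prop) : Set (PMap X) :=
  {φ | EPres E φ ∧ ∀ ψ : PMap X, EPres E ψ → PExt ψ φ → ψ = φ}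

/-- A partial morphism from a graph with topology `(X,E,t)` to `2_τ`:
the preimages of `1` and `0` are `t`-closed (equivalently, the domain is
closed and the restriction to the domain is continuous into discrete `2`),
and the map is `E`-preserving. -/
def PMorphT {X : Type*} (E : X → X → Prop) (t : TopologicalSpace X) (φ : PMap X) : Prop :=
  EPres E φ ∧ @IsClosed X t (pre1 φ) ∧ @IsClosed X t (pre0 φ)

/-- The set of maximal partial morphisms from `(X,E,t)` to `2_τ`. -/
def MPM {X : Type*} (E : X → X → Prop) (t : TopologicalSpace X) : Set (PMap X) :=
  {φ | PMorphT E t φ ∧ ∀ ψ : PMap X, PMorphT E t ψ → PExt ψ φ → ψ = φ}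

/-- The relation `E` between partial maps on a lattice `L`:
`(f,g) ∈ E` iff `f x ≤ g x` for all `x ∈ dom f ∩ dom g`. -/
def ErelP {L : Type*} (f g : PMap L) : Prop :=
  ∀ ⦃x : L⦄ ⦃a b : Bool⦄, f x = some a → g x = some b → a ≤ b

/-- `f ≤₁ g` iff `f⁻¹(1) ⊆ g⁻¹(1)`. -/
def le1 {L : Type*} (f g : PMap L) : Prop := pre1 f ⊆ pre1 g

/-- `f ≤₂ g` iff `f⁻¹(0) ⊆ g⁻¹(0)`. -/
def le2 {L : Type*} (f g : PMap L) : Prop := pre0 f ⊆ pre0 g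

section Lat

variable (L : Type*) [Lattice L] [BoundedOrder L]

/-- A partial homomorphism from a bounded lattice `L` to the two-element
bounded lattice `2_B`: its domain is a `{0,1}`-sublattice of `L` and the
restriction to the domain is a bounded-lattice homomorphism. -/
def PHom (f : PMap L) : Prop :=
  f ⊥ = some false ∧ f ⊤ = some true ∧
  ∀ ⦃a b : L⦄ ⦃x y : Bool⦄, f a = some x → f b = some y →
    f (a ⊓ b) = some (x ⊓ y) ∧ f (a ⊔ b) = some (x ⊔ y)

/-- The set of maximal partial homomorphisms (MPHs) from `L` to `2_B`. -/
def MPHset : Set (PMap L) := {f | PHom L f ∧ ∀ g : PMap L, PHom L g → PExt g f → g = f}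

/-- The underlying set of the graph `D♭(L)`. -/
abbrev MPHsub := {f : PMap L // f ∈ MPHset L}

/-- The relation `E` on `MPH(L, 2_B)`, giving the graph `D♭(L)`. -/
def EM (f g : MPHsub L) : Prop := ErelP f.1 g.1

/-- The evaluation map `e_a` on `MPH(L,2_B)` : `e_a(f) = f(a)` if `a ∈ dom f`. -/
def evalM (a : L) : PMap (MPHsub L) := fun f => f.1 a

/-- `V_a = {f ∈ MPH(L,2_B) : f(a) = 0}`. -/
def VaM (a : L) : Set (MPHsub L) := {f | f.1 a = some false}

/-- `W_a = {f ∈ MPH(L,2_B) : f(a) = 1}`. -/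
def WaM (a : L) : Set (MPHsub L) := {f | f.1 a = some true}

/-- The topology on `MPH(L,2_B)` with the sets `V_a`, `W_a` as a subbasis of
closed sets. -/
def tauM : TopologicalSpace (MPHsub L) :=
  TopologicalSpace.generateFrom {U | ∃ a : L, U = (VaM L a)ᶜ ∨ U = (WaM L a)ᶜ}

/-- A (nonempty) lattice filter. -/
def IsLatFilter (F : Set L) : Prop :=
  F.Nonempty ∧ (∀ ⦃a b : L⦄, a ∈ F → a ≤ b → b ∈ F) ∧
    (∀ ⦃a b : L⦄, a ∈ F → b ∈ F → a ⊓ b ∈ F)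

/-- A (nonempty) lattice ideal. -/
def IsLatIdeal (I : Set L) : Prop :=
  I.Nonempty ∧ (∀ ⦃a b : L⦄, a ∈ I → b ≤ a → b ∈ I) ∧
    (∀ ⦃a b : L⦄, a ∈ I → b ∈ I → a ⊔ b ∈ I)

/-- The set of special partial homomorphisms (SPHs) from `L` to `2_B`:
`f⁻¹(1)` is a nonempty filter, `f⁻¹(0)` is a nonempty ideal, and they are
disjoint. -/
def SPHset : Set (PMap L) :=
  {f | IsLatFilter L (pre1 f) ∧ IsLatIdeal L (pre0 f) ∧ Disjoint (pre1 f) (pre0 f)}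

/-- The underlying set of the graph `D̄♭(L)`. -/
abbrev SPHsub := {f : PMap L // f ∈ SPHset L}

/-- The relation `E` on `SPH(L, 2_B)`, giving the graph `D̄♭(L)`. -/
def ES (f g : SPHsub L) : Prop := ErelP f.1 g.1

/-- The evaluation map `ē_a` on `SPH(L,2_B)`. -/
def evalS (a : L) : PMap (SPHsub L) := fun f => f.1 a

/-- `V_a = {f ∈ SPH(L,2_B) : f(a) = 0}`. -/
def VaS (a : L) : Set (SPHsub L) := {f | f.1 a = some false}

/-- `W_a = {f ∈ SPH(L,2_B) : f(a) = 1}`. -/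
def WaS (a : L) : Set (SPHsub L) := {f | f.1 a = some true}

/-- The topology on `SPH(L,2_B)` with the sets `V_a`, `W_a` as a subbasis of
closed sets. -/
def tauS : TopologicalSpace (SPHsub L) :=
  TopologicalSpace.generateFrom {U | ∃ a : L, U = (VaS L a)ᶜ ∨ U = (WaS L a)ᶜ}

/-- The carrier of the completion built from `D♭(L)`. -/
abbrev CX := {φ : PMap (MPHsub L) // φ ∈ MPE (EM L)}

/-- The carrier of the completion built from `D̄♭(L)`. -/
abbrev CY := {φ : PMap (SPHsub L) // φ ∈ MPE (ES L)}

end Lat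

/-! ### Auxiliary development -/

attribute [local instance] Classical.propDecidable

section BoolAux

lemma bool_not_le {a b : Bool} (h : ¬ a ≤ b) : a = true ∧ b = false := by
  cases a <;> cases b <;> simp_all

lemma not_erelP {L : Type*} {f g : PMap L} (h : ¬ ErelP f g) :
    ∃ x, f x = some true ∧ g x = some false := by
  unfold ErelP at h
  push_neg at h
  obtain ⟨x, a, b, hfa, hgb, hab⟩ := h
  obtain ⟨ha, hb⟩ := bool_not_le (a := a) (b := b) (not_le_of_gt hab)
  subst ha; subst hb; exact ⟨x, hfa, hgb⟩

lemma erelP_refl {L : Type*} (f : PMap L) : ErelP f f := by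
  intro x a b ha hb
  rw [ha] at hb; cases hb; exact le_refl _

end BoolAux

section PairMap

variable {α : Type*}

/-- The partial map determined by a pair of sets. -/
noncomputable def pairMap (F I : Set α) : PMap α :=
  fun x => if x ∈ F then some true else if x ∈ I then some false else none

lemma pairMap_pre1 (F I : Set α) : pre1 (pairMap F I) = F := by
  ext x
  simp only [pre1, pairMap, Set.mem_setOf_eq]
  by_cases hF : x ∈ F <;> by_cases hI : x ∈ I <;> simp [hF, hI]

lemma pairMap_pre0 {F I : Set α} (hdisj : ∀ x, x ∈ F → x ∈ I → False) :
    pre0 (pairMap F I) = I := by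
  ext x
  simp only [pre0, pairMap, Set.mem_setOf_eq]
  by_cases hF : x ∈ F <;> by_cases hI : x ∈ I
  · exact absurd (hdisj x hF hI) not_false
  all_goals simp [hF, hI]

lemma pairMap_eq_true {F I : Set α} {x : α} (hx : x ∈ F) :
    pairMap F I x = some true := by simp [pairMap, hx]

lemma pairMap_eq_false {F I : Set α} {x : α} (hx : x ∈ I) (hx' : x ∉ F) :
    pairMap F I x = some false := by simp [pairMap, hx, hx']

end PairMap

section PairPhom

variable {L : Type*} [Lattice L] [BoundedOrder L]

lemma latFilter_top {F : Set L} (hF : IsLatFilter L F) : ⊤ ∈ F := by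
  obtain ⟨⟨a, ha⟩, hup, _⟩ := hF
  exact hup ha le_top

lemma latIdeal_bot {I : Set L} (hI : IsLatIdeal L I) : ⊥ ∈ I := by
  obtain ⟨⟨a, ha⟩, hdn, _⟩ := hI
  exact hdn ha bot_le

lemma pairMap_phom {F I : Set L} (hF : IsLatFilter L F) (hI : IsLatIdeal L I)
    (hdisj : ∀ x, x ∈ F → x ∈ I → False) : PHom L (pairMap F I) := by
  obtain ⟨_, hFup, hFinf⟩ := hF
  obtain ⟨_, hIdn, hIsup⟩ := hI
  have htop : ⊤ ∈ F := latFilter_top ⟨‹_›, hFup, hFinf⟩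
  have hbot : ⊥ ∈ I := latIdeal_bot ⟨‹_›, hIdn, hIsup⟩
  refine ⟨pairMap_eq_false hbot (fun h => hdisj ⊥ h hbot), pairMap_eq_true htop, ?_⟩
  intro a b x y hax hby
  -- decode values
  have hval : ∀ {c : L} {z : Bool}, pairMap F I c = some z →
      (z = true ∧ c ∈ F) ∨ (z = false ∧ c ∈ I ∧ c ∉ F) := by
    intro c z h
    by_cases hc : c ∈ F
    · rw [pairMap_eq_true hc] at h; cases h; exact Or.inl ⟨rfl, hc⟩
    · by_cases hc' : c ∈ I
      · rw [pairMap_eq_false hc' hc] at h; cases h; exact Or.inr ⟨rfl, hc', hc⟩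
      · simp [pairMap, hc, hc'] at h
  rcases hval hax with ⟨hx1, haF⟩ | ⟨hx0, haI, _⟩ <;>
  rcases hval hby with ⟨hy1, hbF⟩ | ⟨hy0, hbI, _⟩
  · subst hx1; subst hy1
    exact ⟨pairMap_eq_true (hFinf haF hbF),
      pairMap_eq_true (hFup haF le_sup_left)⟩
  · subst hx1; subst hy0
    constructor
    · exact pairMap_eq_false (hIdn hbI inf_le_right)
        (fun h => hdisj _ h (hIdn hbI inf_le_right))
    · exact pairMap_eq_true (hFup haF le_sup_left)
  · subst hx0; subst hy1
    constructor
    · exact pairMap_eq_false (hIdn haI inf_le_left)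
        (fun h => hdisj _ h (hIdn haI inf_le_left))
    · exact pairMap_eq_true (hFup hbF le_sup_right)
  · subst hx0; subst hy0
    constructor
    · exact pairMap_eq_false (hIdn haI inf_le_left)
        (fun h => hdisj _ h (hIdn haI inf_le_left))
    · exact pairMap_eq_false (hIsup haI hbI)
        (fun h => hdisj _ h (hIsup haI hbI))

end PairPhom
section Zorn

variable {L : Type*} [Lattice L] [BoundedOrder L]

/-- Every partial homomorphism extends to a maximal one. -/
lemma exists_mph_ext {f : PMap L} (hf : PHom L f) :
    ∃ g ∈ MPHset L, PExt g f := by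
  -- Zorn on the subtype of partial homs extending f
  let α := {g : PMap L // PHom L g ∧ PExt g f}
  let r : α → α → Prop := fun g h => PExt h.1 g.1
  have hchain : ∀ c : Set α, IsChain r c → ∃ ub, ∀ a ∈ c, r a ub := by
    intro c hc
    by_cases hne : c.Nonempty
    · -- union of the chain
      classical
      let u : PMap L := fun x =>
        if h : ∃ g : α, g ∈ c ∧ g.1 x ≠ none then h.choose.1 x else none
      -- consistency: values agree across the chain
      have hcons : ∀ g ∈ c, ∀ x (b : Bool), g.1 x = some b → u x = some b := by
        intro g hg x b hgx
        have hex : ∃ g' : α, g' ∈ c ∧ g'.1 x ≠ none := ⟨g, hg, by simp [hgx]⟩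
        have := hex.choose_spec
        obtain ⟨hgc', hne'⟩ := this
        simp only [u, dif_pos hex]
        rcases eq_or_ne hex.choose g with h | h
        · rw [h]; exact hgx
        · rcases hc hgc' hg h with h1 | h1
          · -- PExt g.1 hex.choose.1
            cases hx : hex.choose.1 x with
            | none => exact absurd hx hne'
            | some b' =>
              have h2 := h1 hx
              rw [hgx] at h2
              injection h2 with h3
              simp [h3]
          · exact h1 hgx
      have hvalu : ∀ x (b : Bool), u x = some b → ∃ g ∈ c, g.1 x = some b := by
        intro x b hux
        by_cases hex : ∃ g : α, g ∈ c ∧ g.1 x ≠ none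
        · refine ⟨hex.choose, hex.choose_spec.1, ?_⟩
          simpa only [u, dif_pos hex] using hux
        · simp [u, dif_neg hex] at hux
      obtain ⟨g₀, hg₀⟩ := hne
      have hu : PHom L u := by
        refine ⟨hcons g₀ hg₀ ⊥ false g₀.2.1.1, hcons g₀ hg₀ ⊤ true g₀.2.1.2.1, ?_⟩
        intro a b x y hax hby
        obtain ⟨g1, hg1, hg1a⟩ := hvalu a x hax
        obtain ⟨g2, hg2, hg2b⟩ := hvalu b y hby
        rcases eq_or_ne g1 g2 with h | h
        · subst h
          obtain ⟨h1, h2⟩ := g1.2.1.2.2 hg1a hg2b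
          exact ⟨hcons g1 hg1 _ _ h1, hcons g1 hg1 _ _ h2⟩
        · rcases hc hg1 hg2 h with hle | hle
          · obtain ⟨h1, h2⟩ := g2.2.1.2.2 (hle hg1a) hg2b
            exact ⟨hcons g2 hg2 _ _ h1, hcons g2 hg2 _ _ h2⟩
          · obtain ⟨h1, h2⟩ := g1.2.1.2.2 hg1a (hle hg2b)
            exact ⟨hcons g1 hg1 _ _ h1, hcons g1 hg1 _ _ h2⟩
      have huf : PExt u f := fun x b hb => hcons g₀ hg₀ x b (g₀.2.2 hb)
      exact ⟨⟨u, hu, huf⟩, fun g hg x b hb => hcons g hg x b hb⟩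
    · exact ⟨⟨f, hf, fun _ _ h => h⟩, fun a ha => absurd ⟨a, ha⟩ hne⟩
  have htrans : ∀ {a b c : α}, r a b → r b c → r a c := by
    intro a b c hab hbc x v hv
    exact hbc (hab hv)
  obtain ⟨m, hm⟩ := exists_maximal_of_chains_bounded hchain @htrans
  refine ⟨m.1, ⟨m.2.1, ?_⟩, m.2.2⟩
  intro ψ hψ hext
  have : PExt ψ f := fun x b hb => hext (m.2.2 hb)
  have hback := hm ⟨ψ, hψ, this⟩ hext
  funext x
  cases hx : m.1 x with
  | some b => exact (hext hx)
  | none =>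
    cases hψx : ψ x with
    | none => rfl
    | some b => rw [hback hψx] at hx; exact absurd hx (by simp)
end Zorn
section MPHStruct

variable {L : Type*} [Lattice L] [BoundedOrder L]

lemma mph_pre1_pre0_disj {f : PMap L} {x : L}
    (h1 : x ∈ pre1 f) (h0 : x ∈ pre0 f) : False := by
  simp only [pre1, pre0, Set.mem_setOf_eq] at h1 h0
  rw [h1] at h0; simp at h0

lemma mph_struct {f : PMap L} (hf : f ∈ MPHset L) :
    IsLatFilter L (pre1 f) ∧ IsLatIdeal L (pre0 f) := by
  obtain ⟨hph, hmax⟩ := hf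
  obtain ⟨hbot, htop, hmj⟩ := hph
  set F : Set L := {x | ∃ u ∈ pre1 f, u ≤ x} with hF
  set I : Set L := {x | ∃ v ∈ pre0 f, x ≤ v} with hI
  have hdisj : ∀ x, x ∈ F → x ∈ I → False := by
    rintro x ⟨u, hu, hux⟩ ⟨v, hv, hxv⟩
    have huv : u ≤ v := le_trans hux hxv
    have := (hmj hu hv).2
    rw [sup_eq_right.2 huv] at this
    rw [hv] at this; simp at this
  have hFfil : IsLatFilter L F := by
    refine ⟨⟨⊤, ⟨⊤, htop, le_refl _⟩⟩, ?_, ?_⟩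
    · rintro a b ⟨u, hu, hua⟩ hab; exact ⟨u, hu, le_trans hua hab⟩
    · rintro a b ⟨u, hu, hua⟩ ⟨u', hu', hub⟩
      exact ⟨u ⊓ u', (hmj hu hu').1, inf_le_inf hua hub⟩
  have hIidl : IsLatIdeal L I := by
    refine ⟨⟨⊥, ⟨⊥, hbot, le_refl _⟩⟩, ?_, ?_⟩
    · rintro a b ⟨v, hv, hva⟩ hab; exact ⟨v, hv, le_trans hab hva⟩
    · rintro a b ⟨v, hv, hva⟩ ⟨v', hv', hvb⟩
      exact ⟨v ⊔ v', (hmj hv hv').2, sup_le_sup hva hvb⟩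
  have hphom := pairMap_phom hFfil hIidl hdisj
  have hext : PExt (pairMap F I) f := by
    intro x b hb
    cases b with
    | true => exact pairMap_eq_true ⟨x, hb, le_refl x⟩
    | false =>
      refine pairMap_eq_false ⟨x, hb, le_refl x⟩ (fun hxF => hdisj x hxF ⟨x, hb, le_refl x⟩)
  have heq := hmax _ hphom hext
  constructor
  · have : pre1 f = F := by rw [← heq, pairMap_pre1]
    rw [this]; exact hFfil
  · have : pre0 f = I := by rw [← heq, pairMap_pre0 hdisj]
    rw [this]; exact hIidl

/-- Extend keeping the 1-set and sending `v` to `0`. -/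
lemma mph_add_ideal {f : PMap L} (hf : f ∈ MPHset L) {v : L} (hv : f v ≠ some true) :
    ∃ q ∈ MPHset L, (∀ x, f x = some true → q x = some true) ∧ q v = some false := by
  obtain ⟨hFfil, _⟩ := mph_struct hf
  set F : Set L := pre1 f
  set I : Set L := Set.Iic v
  have hdisj : ∀ x, x ∈ F → x ∈ I → False := by
    intro x hxF hxI
    exact hv (hFfil.2.1 hxF hxI)
  have hIidl : IsLatIdeal L I := by
    refine ⟨⟨v, le_refl v⟩, ?_, ?_⟩
    · intro a b ha hba; exact le_trans hba ha
    · intro a b ha hb; exact sup_le ha hb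
  obtain ⟨q, hq, hqext⟩ := exists_mph_ext (pairMap_phom hFfil hIidl hdisj)
  refine ⟨q, hq, fun x hx => hqext (pairMap_eq_true hx), ?_⟩
  exact hqext (pairMap_eq_false (le_refl v) (fun hvF => hdisj v hvF (le_refl v)))

/-- Extend keeping the 0-set and sending `u` to `1`. -/
lemma mph_add_filter {h : PMap L} (hh : h ∈ MPHset L) {u : L} (hu : h u ≠ some false) :
    ∃ q ∈ MPHset L, (∀ x, h x = some false → q x = some false) ∧ q u = some true := by
  obtain ⟨_, hIidl⟩ := mph_struct hh
  set F : Set L := Set.Ici u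
  set I : Set L := pre0 h
  have hdisj : ∀ x, x ∈ F → x ∈ I → False := by
    intro x hxF hxI
    exact hu (hIidl.2.1 hxI hxF)
  have hFfil : IsLatFilter L F := by
    refine ⟨⟨u, le_refl u⟩, ?_, ?_⟩
    · intro a b ha hab; exact le_trans ha hab
    · intro a b ha hb; exact le_inf ha hb
  obtain ⟨q, hq, hqext⟩ := exists_mph_ext (pairMap_phom hFfil hIidl hdisj)
  refine ⟨q, hq, ?_, hqext (pairMap_eq_true (le_refl u))⟩
  intro x hx
  exact hqext (pairMap_eq_false hx (fun hxF => hdisj x hxF hx))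

end MPHStruct
section Polar

variable {X : Type*} (E : X → X → Prop)

/-- Left polar. -/
def lpol (B : Set X) : Set X := {x | ∀ y ∈ B, ¬ E x y}

/-- Right polar. -/
def rpol (A : Set X) : Set X := {y | ∀ x ∈ A, ¬ E x y}

variable {E}

lemma lpol_anti {A B : Set X} (h : A ⊆ B) : lpol E B ⊆ lpol E A :=
  fun _ hx y hy => hx y (h hy)

lemma rpol_anti {A B : Set X} (h : A ⊆ B) : rpol E B ⊆ rpol E A :=
  fun _ hx y hy => hx y (h hy)

lemma subset_lpol_rpol (A : Set X) : A ⊆ lpol E (rpol E A) :=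
  fun x hx y hy => hy x hx

lemma subset_rpol_lpol (B : Set X) : B ⊆ rpol E (lpol E B) :=
  fun y hy x hx => hx y hy

lemma lpol_rpol_lpol (B : Set X) : lpol E (rpol E (lpol E B)) = lpol E B :=
  Set.Subset.antisymm (lpol_anti (subset_rpol_lpol B)) (subset_lpol_rpol (lpol E B))

lemma rpol_lpol_rpol (A : Set X) : rpol E (lpol E (rpol E A)) = rpol E A :=
  Set.Subset.antisymm (rpol_anti (subset_lpol_rpol A)) (subset_rpol_lpol (rpol E A))

lemma lpol_iUnion {ι : Type*} {T : Set ι} {S : ι → Set X} :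
    lpol E (⋃ i ∈ T, S i) = ⋂ i ∈ T, lpol E (S i) := by
  ext x
  simp only [lpol, Set.mem_setOf_eq, Set.mem_iUnion, Set.mem_iInter]
  constructor
  · intro h i hi y hy; exact h y ⟨i, hi, hy⟩
  · rintro h y ⟨i, hi, hy⟩; exact h i hi y hy

lemma rpol_iUnion {ι : Type*} {T : Set ι} {S : ι → Set X} :
    rpol E (⋃ i ∈ T, S i) = ⋂ i ∈ T, rpol E (S i) := by
  ext x
  simp only [rpol, Set.mem_setOf_eq, Set.mem_iUnion, Set.mem_iInter]
  constructor
  · intro h i hi y hy; exact h y ⟨i, hi, hy⟩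
  · rintro h y ⟨i, hi, hy⟩; exact h i hi y hy

end Polar

section MPELemmas

variable {X : Type*} {E : X → X → Prop}

lemma update_val_cases {φ : PMap X} {z : X} {v : Option Bool} {x : X} {w : Option Bool}
    (h : Function.update φ z v x = w) : (x = z ∧ v = w) ∨ (x ≠ z ∧ φ x = w) := by
  by_cases hx : x = z
  · subst hx; rw [Function.update_self] at h; exact Or.inl ⟨rfl, h⟩
  · rw [Function.update_of_ne hx] at h; exact Or.inr ⟨hx, h⟩

lemma mpe_pre0_eq (hrefl : ∀ x, E x x) {φ : PMap X} (hφ : φ ∈ MPE E) :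
    pre0 φ = rpol E (pre1 φ) := by
  obtain ⟨hpres, hmax⟩ := hφ
  apply Set.Subset.antisymm
  · intro y hy x hx hE
    exact absurd (hpres hE hx hy) (by decide)
  · intro y hy
    by_contra hy0
    cases hφy : φ y with
    | some b =>
      cases b with
      | false => exact hy0 hφy
      | true => exact hy y hφy (hrefl y)
    | none =>
      classical
      have hψpres : EPres E (Function.update φ y (some false)) := by
        intro x y' hE a b hx hy'
        rcases update_val_cases hx with ⟨hx1, hx2⟩ | ⟨hx1, hx2⟩ <;>
          rcases update_val_cases hy' with ⟨hy1, hy2⟩ | ⟨hy1, hy2⟩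
        · cases hx2; cases hy2; exact le_refl _
        · cases hx2; exact Bool.false_le _
        · cases hy2
          cases a with
          | false => exact Bool.false_le _
          | true => subst hy1; exact absurd hE (hy x hx2)
        · exact hpres hE hx2 hy2
      have hψext : PExt (Function.update φ y (some false)) φ := by
        intro x b hb
        have hxy : x ≠ y := fun h => by rw [h, hφy] at hb; exact absurd hb (by simp)
        rw [Function.update_of_ne hxy]; exact hb
      have heq := hmax _ hψpres hψext
      have h2 : Function.update φ y (some false) y = φ y := by rw [heq]
      rw [hφy, Function.update_self] at h2
      exact absurd h2 (by simp)

lemma mpe_pre1_eq (hrefl : ∀ x, E x x) {φ : PMap X} (hφ : φ ∈ MPE E) :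
    pre1 φ = lpol E (pre0 φ) := by
  obtain ⟨hpres, hmax⟩ := hφ
  apply Set.Subset.antisymm
  · intro x hx y hy hE
    exact absurd (hpres hE hx hy) (by decide)
  · intro x hx
    by_contra hx1
    cases hφx : φ x with
    | some b =>
      cases b with
      | true => exact hx1 hφx
      | false => exact hx x hφx (hrefl x)
    | none =>
      classical
      have hψpres : EPres E (Function.update φ x (some true)) := by
        intro x' y' hE a b hx' hy'
        rcases update_val_cases hx' with ⟨h1, h2⟩ | ⟨h1, h2⟩ <;>
          rcases update_val_cases hy' with ⟨h3, h4⟩ | ⟨h3, h4⟩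
        · cases h2; cases h4; exact le_refl _
        · cases h2
          cases b with
          | true => exact Bool.le_true _
          | false => subst h1; exact absurd hE (hx y' h4)
        · cases h4; exact Bool.le_true _
        · exact hpres hE h2 h4
      have hψext : PExt (Function.update φ x (some true)) φ := by
        intro x' b hb
        have hx'x : x' ≠ x := fun h => by rw [h, hφx] at hb; exact absurd hb (by simp)
        rw [Function.update_of_ne hx'x]; exact hb
      have heq := hmax _ hψpres hψext
      have h2 : Function.update φ x (some true) x = φ x := by rw [heq]
      rw [hφx, Function.update_self] at h2
      exact absurd h2 (by simp)

lemma mpe_ext (hrefl : ∀ x, E x x) {φ ψ : PMap X} (hφ : φ ∈ MPE E) (hψ : ψ ∈ MPE E)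
    (h1 : pre1 φ = pre1 ψ) : φ = ψ := by
  have h0 : pre0 φ = pre0 ψ := by
    rw [mpe_pre0_eq hrefl hφ, mpe_pre0_eq hrefl hψ, h1]
  funext x
  cases hφx : φ x with
  | some b =>
    cases b with
    | true =>
      have : x ∈ pre1 ψ := h1 ▸ (show x ∈ pre1 φ from hφx)
      rw [show ψ x = some true from this]
    | false =>
      have : x ∈ pre0 ψ := h0 ▸ (show x ∈ pre0 φ from hφx)
      rw [show ψ x = some false from this]
  | none =>
    cases hψx : ψ x with
    | none => rfl
    | some b =>
      cases b with
      | true =>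
        have : x ∈ pre1 φ := h1 ▸ (show x ∈ pre1 ψ from hψx)
        rw [show φ x = some true from this] at hφx; exact absurd hφx (by simp)
      | false =>
        have : x ∈ pre0 φ := h0 ▸ (show x ∈ pre0 ψ from hψx)
        rw [show φ x = some false from this] at hφx; exact absurd hφx (by simp)

lemma mpe_of_polar {φ : PMap X} (hA : pre1 φ = lpol E (pre0 φ))
    (hB : pre0 φ = rpol E (pre1 φ)) : φ ∈ MPE E := by
  constructor
  · intro x y hE a b hx hy
    cases a with
    | false => exact Bool.false_le _
    | true =>
      cases b with
      | true => exact le_refl _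
      | false =>
        have hx1 : x ∈ lpol E (pre0 φ) := hA ▸ (show x ∈ pre1 φ from hx)
        exact absurd hE (hx1 y hy)
  · intro ψ hψpres hψext
    funext x
    cases hφx : φ x with
    | some b => exact hψext hφx
    | none =>
      cases hψx : ψ x with
      | none => rfl
      | some c =>
        exfalso
        cases c with
        | true =>
          have : x ∈ pre1 φ := by
            rw [hA]
            intro y hy hE
            exact absurd (hψpres hE hψx (hψext hy)) (by decide)
          rw [show φ x = some true from this] at hφx; exact absurd hφx (by simp)
        | false =>
          have : x ∈ pre0 φ := by
            rw [hB]
            intro x' hx' hE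
            exact absurd (hψpres hE (hψext hx') hψx) (by decide)
          rw [show φ x = some false from this] at hφx; exact absurd hφx (by simp)

end MPELemmas

section Ulim

variable {ι α : Type*} (U : Ultrafilter ι) (f : ι → PMap α)

/-- Pointwise ultralimit of a family of partial maps. -/
noncomputable def ulim : PMap α := fun x =>
  if {i | f i x = some true} ∈ U then some true
  else if {i | f i x = some false} ∈ U then some false else none

variable {U f}

lemma ulim_eq_some {x : α} {b : Bool} (h : {i | f i x = some b} ∈ U) :
    ulim U f x = some b := by
  have hdisj : ¬ ({i | f i x = some true} ∈ U ∧ {i | f i x = some false} ∈ U) := by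
    rintro ⟨h1, h0⟩
    have := Filter.inter_mem h1 h0
    have hempty : {i | f i x = some true} ∩ {i | f i x = some false} = ∅ := by
      ext i; simp only [Set.mem_inter_iff, Set.mem_setOf_eq, Set.mem_empty_iff_false, iff_false]
      rintro ⟨ht, hf⟩; rw [ht] at hf; exact absurd hf (by simp)
    rw [hempty] at this
    exact Ultrafilter.empty_notMem this
  cases b with
  | true => simp only [ulim, if_pos h]
  | false =>
    have : {i | f i x = some true} ∉ U := fun h' => hdisj ⟨h', h⟩
    simp only [ulim, if_neg this, if_pos h]

lemma ulim_some_mem {x : α} {b : Bool} (h : ulim U f x = some b) :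
    {i | f i x = some b} ∈ U := by
  by_cases h1 : {i | f i x = some true} ∈ U
  · rw [ulim_eq_some h1] at h; cases h; exact h1
  · by_cases h0 : {i | f i x = some false} ∈ U
    · rw [ulim_eq_some h0] at h; cases h; exact h0
    · simp only [ulim, if_neg h1, if_neg h0] at h; exact absurd h (by simp)

end Ulim

section UlimPhom

variable {L : Type*} [Lattice L] [BoundedOrder L] {ι : Type*}
  {U : Ultrafilter ι} {f : ι → PMap L}

lemma ulim_phom (hf : ∀ i, PHom L (f i)) : PHom L (ulim U f) := by
  refine ⟨?_, ?_, ?_⟩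
  · apply ulim_eq_some
    have : {i | f i ⊥ = some false} = Set.univ := by
      ext i; simp [(hf i).1]
    rw [this]; exact Filter.univ_mem
  · apply ulim_eq_some
    have : {i | f i ⊤ = some true} = Set.univ := by
      ext i; simp [(hf i).2.1]
    rw [this]; exact Filter.univ_mem
  · intro a b x y hax hby
    have ha := ulim_some_mem hax
    have hb := ulim_some_mem hby
    constructor
    · apply ulim_eq_some
      exact Filter.mem_of_superset (Filter.inter_mem ha hb)
        (fun i ⟨hia, hib⟩ => ((hf i).2.2 hia hib).1)
    · apply ulim_eq_some
      exact Filter.mem_of_superset (Filter.inter_mem ha hb)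
        (fun i ⟨hia, hib⟩ => ((hf i).2.2 hia hib).2)

end UlimPhom
section EvalMPE

variable {L : Type*} [Lattice L] [BoundedOrder L]

lemma em_refl (f : MPHsub L) : EM L f f := erelP_refl f.1

lemma w_eq_lpol_v (a : L) : WaM L a = lpol (EM L) (VaM L a) := by
  apply Set.Subset.antisymm
  · intro f hf g hg hE
    exact absurd (hE hf hg) (by decide)
  · intro f hf
    by_contra hfa
    cases hval : f.1 a with
    | some b =>
      cases b with
      | true => exact hfa hval
      | false => exact hf f hval (em_refl f)
    | none =>
      obtain ⟨q, hq, hqext, hqa⟩ := mph_add_ideal f.2 (v := a) (by rw [hval]; simp)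
      refine hf ⟨q, hq⟩ hqa ?_
      intro x c d hfx hqx
      cases c with
      | false => exact Bool.false_le _
      | true =>
        have hqx' : q x = some d := hqx
        rw [hqext x hfx] at hqx'; cases hqx'; exact le_refl _

lemma v_eq_rpol_w (a : L) : VaM L a = rpol (EM L) (WaM L a) := by
  apply Set.Subset.antisymm
  · intro g hg f hf hE
    exact absurd (hE hf hg) (by decide)
  · intro g hg
    by_contra hga
    cases hval : g.1 a with
    | some b =>
      cases b with
      | false => exact hga hval
      | true => exact hg g hval (em_refl g)
    | none =>
      obtain ⟨q, hq, hqext, hqa⟩ := mph_add_filter g.2 (u := a) (by rw [hval]; simp)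
      refine hg ⟨q, hq⟩ hqa ?_
      intro x c d hqx hgx
      cases d with
      | true => exact Bool.le_true _
      | false =>
        have hqx' : q x = some c := hqx
        rw [hqext x hgx] at hqx'; cases hqx'; exact Bool.false_le _

lemma pre1_evalM (a : L) : pre1 (evalM L a) = WaM L a := rfl

lemma pre0_evalM (a : L) : pre0 (evalM L a) = VaM L a := rfl

lemma evalM_mem (a : L) : evalM L a ∈ MPE (EM L) := by
  apply mpe_of_polar
  · rw [pre1_evalM, pre0_evalM]; exact w_eq_lpol_v a
  · rw [pre1_evalM, pre0_evalM]; exact v_eq_rpol_w a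

end EvalMPE

section CXLattice

variable {L : Type*} [Lattice L] [BoundedOrder L]

lemma lpol_rpol_disj {X : Type*} {E : X → X → Prop} (hrefl : ∀ x, E x x) (B : Set X) :
    ∀ x, x ∈ lpol E B → x ∈ rpol E (lpol E B) → False :=
  fun x hx hx' => hx' x hx (hrefl x)

/-- The closed element of `CX L` determined by a set `B` on the `0`-side. -/
noncomputable def closedMk (B : Set (MPHsub L)) : CX L :=
  ⟨pairMap (lpol (EM L) B) (rpol (EM L) (lpol (EM L) B)), by
    apply mpe_of_polar
    · rw [pairMap_pre1, pairMap_pre0 (lpol_rpol_disj em_refl B)]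
      exact (lpol_rpol_lpol B).symm
    · rw [pairMap_pre1, pairMap_pre0 (lpol_rpol_disj em_refl B)]⟩

lemma pre1_closedMk (B : Set (MPHsub L)) : pre1 (closedMk B).1 = lpol (EM L) B :=
  pairMap_pre1 _ _

lemma pre0_closedMk (B : Set (MPHsub L)) :
    pre0 (closedMk B).1 = rpol (EM L) (lpol (EM L) B) :=
  pairMap_pre0 (lpol_rpol_disj em_refl B)

variable (L)

noncomputable instance cxPartialOrder : PartialOrder (CX L) where
  le φ ψ := pre1 φ.1 ⊆ pre1 ψ.1
  le_refl φ := Set.Subset.refl _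
  le_trans φ ψ χ h1 h2 := Set.Subset.trans h1 h2
  le_antisymm φ ψ h1 h2 :=
    Subtype.ext (mpe_ext em_refl φ.2 ψ.2 (Set.Subset.antisymm h1 h2))

noncomputable instance cxInfSet : InfSet (CX L) :=
  ⟨fun T => closedMk (⋃ ψ ∈ T, pre0 ψ.1)⟩

variable {L}

lemma pre1_cInf (T : Set (CX L)) : pre1 (sInf T).1 = ⋂ ψ ∈ T, pre1 ψ.1 := by
  show pre1 (closedMk _).1 = _
  rw [pre1_closedMk, lpol_iUnion]
  exact Set.iInter₂_congr (fun ψ _ => (mpe_pre1_eq em_refl ψ.2).symm)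

lemma cx_isGLB (T : Set (CX L)) : @IsGLB (CX L) (cxPartialOrder L).toLE T (sInf T) := by
  constructor
  · intro ψ hψ
    show pre1 (sInf T).1 ⊆ pre1 ψ.1
    rw [pre1_cInf]
    exact Set.biInter_subset_of_mem hψ
  · intro χ hχ
    show pre1 χ.1 ⊆ pre1 (sInf T).1
    rw [pre1_cInf]
    exact Set.subset_iInter₂ (fun ψ hψ => hχ hψ)

variable (L)

noncomputable def cxCompleteLattice : CompleteLattice (CX L) :=
  completeLatticeOfInf (CX L) cx_isGLB

end CXLattice
section BigLemma

variable {L : Type*} [Lattice L] [BoundedOrder L]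

lemma tauM_basis :
    @TopologicalSpace.IsTopologicalBasis (MPHsub L) (tauM L)
      ((fun f => ⋂₀ f) '' {f : Set (Set (MPHsub L)) |
        f.Finite ∧ f ⊆ {U | ∃ a : L, U = (VaM L a)ᶜ ∨ U = (WaM L a)ᶜ}}) :=
  @TopologicalSpace.isTopologicalBasis_of_subbasis _ (tauM L) _ rfl

lemma isClosed_WaM (b : L) : @IsClosed _ (tauM L) (WaM L b) := by
  letI := tauM L
  rw [← isOpen_compl_iff]
  exact TopologicalSpace.GenerateOpen.basic _ ⟨b, Or.inr rfl⟩

lemma isClosed_VaM (a : L) : @IsClosed _ (tauM L) (VaM L a) := by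
  letI := tauM L
  rw [← isOpen_compl_iff]
  exact TopologicalSpace.GenerateOpen.basic _ ⟨a, Or.inl rfl⟩

/-- Key lemma: a `τ`-closed `1`-preimage of an MPE map is an intersection of `W`s. -/
lemma closed_pre1_inter (φ : CX L) (hcl : @IsClosed _ (tauM L) (pre1 φ.1)) :
    pre1 φ.1 = ⋂ b ∈ {b : L | pre1 φ.1 ⊆ WaM L b}, WaM L b := by
  letI := tauM L
  set A : Set (MPHsub L) := pre1 φ.1 with hAdef
  set B : Set (MPHsub L) := pre0 φ.1 with hBdef
  have hA : A = lpol (EM L) B := mpe_pre1_eq em_refl φ.2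
  apply Set.Subset.antisymm
  · exact Set.subset_iInter₂ (fun b hb => hb)
  · intro g hg
    rw [Set.mem_iInter₂] at hg
    by_contra hgA
    -- g is not in A, so there is h ∈ B with (g,h) ∈ E
    rw [hA] at hgA
    have : ∃ h ∈ B, ErelP g.1 h.1 := by
      by_contra hcon
      push_neg at hcon
      exact hgA (fun y hy hE => hcon y hy hE)
    obtain ⟨h, hhB, hEgh⟩ := this
    set I : Set L := pre0 h.1 with hIdef
    have hIidl : IsLatIdeal L I := (mph_struct h.2).2
    -- every element of A has a 1 inside I
    have hcover : ∀ f : MPHsub L, f ∈ A → ∃ v ∈ I, f.1 v = some true := by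
      intro f hf
      have : ¬ ErelP f.1 h.1 := (hA ▸ hf) h hhB
      obtain ⟨x, hx1, hx0⟩ := not_erelP this
      exact ⟨x, hx0, hx1⟩
    -- main claim: some v ∈ I has A ⊆ W_v
    have hkey : ∃ v ∈ I, A ⊆ WaM L v := by
      by_contra hnot
      push_neg at hnot
      -- choose for each v ∈ I an element of A sending v to 0
      have hsel : ∀ v : I, ∃ F : MPHsub L, F ∈ A ∧ F.1 v.1 = some false := by
        rintro ⟨v, hv⟩
        obtain ⟨f₀, hf₀A, hf₀v⟩ := Set.not_subset.1 (hnot v hv)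
        have hf₀v' : f₀.1 v ≠ some true := hf₀v
        obtain ⟨q, hq, hqext, hqv⟩ := mph_add_ideal f₀.2 hf₀v'
        refine ⟨⟨q, hq⟩, ?_, hqv⟩
        rw [hA]
        intro h' hh' hE
        obtain ⟨x, hx1, hx0⟩ := not_erelP ((hA ▸ hf₀A) h' hh')
        exact absurd (hE (hqext x hx1) hx0) (by decide)
      choose Xf hXA hX0 using hsel
      -- ultrafilter along the ideal I
      haveI hne : Nonempty I := ⟨⟨⊥, latIdeal_bot hIidl⟩⟩
      haveI hdir : IsDirected I (· ≤ ·) := by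
        constructor
        rintro ⟨v, hv⟩ ⟨w, hw⟩
        exact ⟨⟨v ⊔ w, hIidl.2.2 hv hw⟩, le_sup_left, le_sup_right⟩
      haveI : (Filter.atTop : Filter I).NeBot := Filter.atTop_neBot_iff.2 ⟨hne, hdir⟩
      set U : Ultrafilter I := Ultrafilter.of Filter.atTop with hU
      set finf : PMap L := ulim U (fun v => (Xf v).1) with hfinf
      have hph : PHom L finf := ulim_phom (fun v => (Xf v).2.1)
      -- the ultralimit sends all of I to 0
      have hI0 : ∀ v ∈ I, finf v = some false := by
        intro v hv
        apply ulim_eq_some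
        apply Ultrafilter.of_le Filter.atTop
        apply Filter.mem_of_superset (Filter.mem_atTop (⟨v, hv⟩ : I))
        rintro ⟨w, hw⟩ hle
        exact (mph_struct (Xf ⟨w, hw⟩).2).2.2.1 (hX0 ⟨w, hw⟩) hle
      obtain ⟨fstar, hfstar, hfext⟩ := exists_mph_ext hph
      set fsub : MPHsub L := ⟨fstar, hfstar⟩ with hfsub
      -- fsub is in the closure of A, hence in A
      have hfsubA : fsub ∈ A := by
        rw [← hcl.closure_eq]
        rw [mem_closure_iff_nhds]
        intro t ht
        obtain ⟨u, ⟨T, ⟨hTfin, hTsub⟩, rfl⟩, hfu, hut⟩ :=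
          (tauM_basis (L := L)).mem_nhds_iff.1 ht
        have hmem : ∀ s ∈ T, {w : I | (Xf w : MPHsub L) ∈ s} ∈ U := by
          intro s hs
          have hfs : fsub ∈ s := Set.mem_sInter.1 hfu s hs
          obtain ⟨a, hcase⟩ := hTsub hs
          cases hcase with
          | inl hVa =>
            subst hVa
            have hfa : finf a ≠ some false := fun hh => hfs (hfext hh)
            have hnot' : {w : I | (Xf w).1 a = some false} ∉ U :=
              fun hh => hfa (ulim_eq_some hh)
            exact Ultrafilter.compl_mem_iff_notMem.2 hnot'
          | inr hWa =>
            subst hWa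
            have hfa : finf a ≠ some true := fun hh => hfs (hfext hh)
            have hnot' : {w : I | (Xf w).1 a = some true} ∉ U :=
              fun hh => hfa (ulim_eq_some hh)
            exact Ultrafilter.compl_mem_iff_notMem.2 hnot'
        have hint : (⋂ s ∈ T, {w : I | (Xf w : MPHsub L) ∈ s}) ∈ U :=
          (Filter.biInter_mem hTfin).2 hmem
        obtain ⟨w, hw⟩ := Filter.nonempty_of_mem hint
        refine ⟨Xf w, hut (Set.mem_sInter.2 ?_), hXA w⟩
        intro s hs
        exact (Set.mem_iInter₂.1 hw) s hs
      -- contradiction: fsub ∈ A but all its values on I are 0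
      obtain ⟨v, hvI, hv1⟩ := hcover fsub hfsubA
      have h0 : fstar v = some false := hfext (hI0 v hvI)
      have h1 : fstar v = some true := hv1
      rw [h1] at h0
      exact absurd h0 (by simp)
    obtain ⟨v, hvI, hvK⟩ := hkey
    have hgv : g.1 v = some true := hg v hvK
    exact absurd (hEgh hgv hvI) (by decide)

end BigLemma
section BigLemmaDual

variable {L : Type*} [Lattice L] [BoundedOrder L]

/-- Dual key lemma: a `τ`-closed `0`-preimage of an MPE map is an intersection of `V`s. -/
lemma closed_pre0_inter (φ : CX L) (hcl : @IsClosed _ (tauM L) (pre0 φ.1)) :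
    pre0 φ.1 = ⋂ a ∈ {a : L | pre0 φ.1 ⊆ VaM L a}, VaM L a := by
  letI := tauM L
  set A : Set (MPHsub L) := pre1 φ.1 with hAdef
  set B : Set (MPHsub L) := pre0 φ.1 with hBdef
  have hB : B = rpol (EM L) A := mpe_pre0_eq em_refl φ.2
  apply Set.Subset.antisymm
  · exact Set.subset_iInter₂ (fun a ha => ha)
  · intro g hg
    rw [Set.mem_iInter₂] at hg
    by_contra hgB
    rw [hB] at hgB
    have : ∃ f ∈ A, ErelP f.1 g.1 := by
      by_contra hcon
      push_neg at hcon
      exact hgB (fun y hy hE => hcon y hy hE)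
    obtain ⟨f, hfA, hEfg⟩ := this
    set J : Set L := pre1 f.1 with hJdef
    have hJfil : IsLatFilter L J := (mph_struct f.2).1
    have hcover : ∀ h' : MPHsub L, h' ∈ B → ∃ u ∈ J, h'.1 u = some false := by
      intro h' hh'
      have : ¬ ErelP f.1 h'.1 := (hB ▸ hh') f hfA
      obtain ⟨x, hx1, hx0⟩ := not_erelP this
      exact ⟨x, hx1, hx0⟩
    have hkey : ∃ u ∈ J, B ⊆ VaM L u := by
      by_contra hnot
      push_neg at hnot
      have hsel : ∀ u : J, ∃ H : MPHsub L, H ∈ B ∧ H.1 u.1 = some true := by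
        rintro ⟨u, hu⟩
        obtain ⟨h₀, hh₀B, hh₀u⟩ := Set.not_subset.1 (hnot u hu)
        have hh₀u' : h₀.1 u ≠ some false := hh₀u
        obtain ⟨q, hq, hqext, hqu⟩ := mph_add_filter h₀.2 hh₀u'
        refine ⟨⟨q, hq⟩, ?_, hqu⟩
        rw [hB]
        intro f' hf' hE
        obtain ⟨x, hx1, hx0⟩ := not_erelP ((hB ▸ hh₀B) f' hf')
        exact absurd (hE hx1 (hqext x hx0)) (by decide)
      choose Xf hXB hX1 using hsel
      haveI hne : Nonempty J := ⟨⟨⊤, latFilter_top hJfil⟩⟩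
      haveI hdir : IsDirected J (· ≥ ·) := by
        constructor
        rintro ⟨v, hv⟩ ⟨w, hw⟩
        exact ⟨⟨v ⊓ w, hJfil.2.2 hv hw⟩, inf_le_left, inf_le_right⟩
      haveI : (Filter.atBot : Filter J).NeBot := Filter.atBot_neBot_iff.2 ⟨hne, hdir⟩
      set U : Ultrafilter J := Ultrafilter.of Filter.atBot with hU
      set finf : PMap L := ulim U (fun u => (Xf u).1) with hfinf
      have hph : PHom L finf := ulim_phom (fun u => (Xf u).2.1)
      have hJ1 : ∀ u ∈ J, finf u = some true := by
        intro u hu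
        apply ulim_eq_some
        apply Ultrafilter.of_le Filter.atBot
        apply Filter.mem_of_superset (Filter.mem_atBot (⟨u, hu⟩ : J))
        rintro ⟨w, hw⟩ hle
        exact (mph_struct (Xf ⟨w, hw⟩).2).1.2.1 (hX1 ⟨w, hw⟩) hle
      obtain ⟨fstar, hfstar, hfext⟩ := exists_mph_ext hph
      set fsub : MPHsub L := ⟨fstar, hfstar⟩ with hfsub
      have hfsubB : fsub ∈ B := by
        rw [← hcl.closure_eq]
        rw [mem_closure_iff_nhds]
        intro t ht
        obtain ⟨u, ⟨T, ⟨hTfin, hTsub⟩, rfl⟩, hfu, hut⟩ :=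
          (tauM_basis (L := L)).mem_nhds_iff.1 ht
        have hmem : ∀ s ∈ T, {w : J | (Xf w : MPHsub L) ∈ s} ∈ U := by
          intro s hs
          have hfs : fsub ∈ s := Set.mem_sInter.1 hfu s hs
          obtain ⟨a, hcase⟩ := hTsub hs
          cases hcase with
          | inl hVa =>
            subst hVa
            have hfa : finf a ≠ some false := fun hh => hfs (hfext hh)
            have hnot' : {w : J | (Xf w).1 a = some false} ∉ U :=
              fun hh => hfa (ulim_eq_some hh)
            exact Ultrafilter.compl_mem_iff_notMem.2 hnot'
          | inr hWa =>
            subst hWa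
            have hfa : finf a ≠ some true := fun hh => hfs (hfext hh)
            have hnot' : {w : J | (Xf w).1 a = some true} ∉ U :=
              fun hh => hfa (ulim_eq_some hh)
            exact Ultrafilter.compl_mem_iff_notMem.2 hnot'
        have hint : (⋂ s ∈ T, {w : J | (Xf w : MPHsub L) ∈ s}) ∈ U :=
          (Filter.biInter_mem hTfin).2 hmem
        obtain ⟨w, hw⟩ := Filter.nonempty_of_mem hint
        refine ⟨Xf w, hut (Set.mem_sInter.2 ?_), hXB w⟩
        intro s hs
        exact (Set.mem_iInter₂.1 hw) s hs
      obtain ⟨u, huJ, hu0⟩ := hcover fsub hfsubB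
      have h1 : fstar u = some true := hfext (hJ1 u huJ)
      have h0 : fstar u = some false := hu0
      rw [h1] at h0
      exact absurd h0 (by simp)
    obtain ⟨u, huJ, huK⟩ := hkey
    have hgu : g.1 u = some false := hg u huK
    exact absurd (hEfg huJ hgu) (by decide)

end BigLemmaDual
section Final

variable {L : Type*} [Lattice L] [BoundedOrder L]

lemma pre0_cSup (T : Set (CX L)) :
    pre0 (((cxCompleteLattice L).sSup T).1) = ⋂ ψ ∈ T, pre0 ψ.1 := by
  letI := cxCompleteLattice L
  show pre0 (sSup T).1 = _
  apply Set.Subset.antisymm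
  · apply Set.subset_iInter₂
    intro ψ hψ
    have hle : pre1 ψ.1 ⊆ pre1 (sSup T).1 := le_sSup hψ
    rw [mpe_pre0_eq em_refl (sSup T).2, mpe_pre0_eq em_refl ψ.2]
    exact rpol_anti hle
  · set Bstar : Set (MPHsub L) := ⋂ ψ ∈ T, pre0 ψ.1 with hBstar
    have hBcl : rpol (EM L) (lpol (EM L) Bstar) = Bstar := by
      have h1 : Bstar = rpol (EM L) (⋃ ψ ∈ T, pre1 ψ.1) := by
        rw [rpol_iUnion]
        exact Set.iInter₂_congr (fun ψ _ => mpe_pre0_eq em_refl ψ.2)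
      rw [h1, rpol_lpol_rpol]
    have hub : ∀ ψ ∈ T, @LE.le (CX L) (cxPartialOrder L).toLE ψ (closedMk Bstar) := by
      intro ψ hψ
      show pre1 ψ.1 ⊆ pre1 (closedMk Bstar).1
      rw [pre1_closedMk, mpe_pre1_eq em_refl ψ.2]
      exact lpol_anti (Set.biInter_subset_of_mem hψ)
    have hle : pre1 (sSup T).1 ⊆ pre1 (closedMk Bstar).1 := sSup_le hub
    rw [mpe_pre0_eq em_refl (sSup T).2]
    have h2 : Bstar = rpol (EM L) (pre1 (closedMk Bstar).1) := by
      rw [pre1_closedMk]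
      exact hBcl.symm
    rw [h2]
    exact rpol_anti hle

end Final

/-- **Filter and ideal elements.** Let `L` be a bounded lattice,
`X = D♭(L)` and `φ ∈ C(X) = MPE(X,2)`. The following are equivalent:
(1) `φ` is a filter element (a meet of elements `e_a`); (2) `φ⁻¹(1) = ⋂ {W_b : b ∈ K}`
for some `K ⊆ L`; (3) `φ⁻¹(1)` is `τ`-closed. Dually: (1') `φ` is an ideal
element (a join of elements `e_a`); (2') `φ⁻¹(0) = ⋂ {V_a : a ∈ M}` for some
`M ⊆ L`; (3') `φ⁻¹(0)` is `τ`-closed. -/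
theorem stmt_9 (L : Type*) [Lattice L] [BoundedOrder L] :
    ∃ inst : CompleteLattice (CX L),
      (∀ φ ψ : CX L, inst.le φ ψ ↔ pre1 φ.1 ⊆ pre1 ψ.1) ∧
      ∃ e : L → CX L,
        (∀ a : L, (e a).1 = evalM L a) ∧
        ∀ φ : CX L,
          (((∃ S : Set L, φ = inst.sInf (e '' S)) ↔
              ∃ K : Set L, pre1 φ.1 = ⋂ b ∈ K, WaM L b) ∧
           ((∃ S : Set L, φ = inst.sInf (e '' S)) ↔
              @IsClosed _ (tauM L) (pre1 φ.1))) ∧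
          (((∃ S : Set L, φ = inst.sSup (e '' S)) ↔
              ∃ M : Set L, pre0 φ.1 = ⋂ a ∈ M, VaM L a) ∧
           ((∃ S : Set L, φ = inst.sSup (e '' S)) ↔
              @IsClosed _ (tauM L) (pre0 φ.1))) := by
  refine ⟨cxCompleteLattice L, fun φ ψ => Iff.rfl,
    fun a => ⟨evalM L a, evalM_mem a⟩, fun a => rfl, ?_⟩
  set e : L → CX L := fun a => ⟨evalM L a, evalM_mem a⟩ with he
  have hinf : ∀ S : Set L,
      pre1 ((cxCompleteLattice L).sInf (e '' S)).1 = ⋂ b ∈ S, WaM L b := by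
    intro S
    have h1 : pre1 (sInf (e '' S)).1 = ⋂ ψ ∈ e '' S, pre1 ψ.1 := pre1_cInf _
    rw [show (cxCompleteLattice L).sInf (e '' S) = sInf (e '' S) from rfl, h1,
      Set.biInter_image]
    exact Set.iInter₂_congr (fun b _ => rfl)
  have hsup : ∀ S : Set L,
      pre0 ((cxCompleteLattice L).sSup (e '' S)).1 = ⋂ a ∈ S, VaM L a := by
    intro S
    rw [pre0_cSup, Set.biInter_image]
    exact Set.iInter₂_congr (fun a _ => rfl)
  -- the four equivalences
  intro φ
  have h12 : (∃ S : Set L, φ = (cxCompleteLattice L).sInf (e '' S)) ↔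
      ∃ K : Set L, pre1 φ.1 = ⋂ b ∈ K, WaM L b := by
    constructor
    · rintro ⟨S, rfl⟩; exact ⟨S, hinf S⟩
    · rintro ⟨K, hK⟩
      refine ⟨K, Subtype.ext (mpe_ext em_refl φ.2
        ((cxCompleteLattice L).sInf (e '' K)).2 ?_)⟩
      rw [hK, hinf K]
  have h12' : (∃ S : Set L, φ = (cxCompleteLattice L).sSup (e '' S)) ↔
      ∃ M : Set L, pre0 φ.1 = ⋂ a ∈ M, VaM L a := by
    constructor
    · rintro ⟨S, rfl⟩; exact ⟨S, hsup S⟩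
    · rintro ⟨M, hM⟩
      refine ⟨M, Subtype.ext (mpe_ext em_refl φ.2
        ((cxCompleteLattice L).sSup (e '' M)).2 ?_)⟩
      have h0 : pre0 φ.1 = pre0 ((cxCompleteLattice L).sSup (e '' M)).1 := by
        rw [hM, hsup M]
      rw [mpe_pre1_eq em_refl φ.2,
        mpe_pre1_eq em_refl ((cxCompleteLattice L).sSup (e '' M)).2, h0]
  have h23 : (∃ K : Set L, pre1 φ.1 = ⋂ b ∈ K, WaM L b) →
      @IsClosed _ (tauM L) (pre1 φ.1) := by
    letI := tauM L
    rintro ⟨K, hK⟩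
    rw [hK]
    exact isClosed_biInter (fun b _ => isClosed_WaM b)
  have h23' : (∃ M : Set L, pre0 φ.1 = ⋂ a ∈ M, VaM L a) →
      @IsClosed _ (tauM L) (pre0 φ.1) := by
    letI := tauM L
    rintro ⟨M, hM⟩
    rw [hM]
    exact isClosed_biInter (fun a _ => isClosed_VaM a)
  refine ⟨⟨h12, h12.trans ⟨h23, fun hcl => ⟨_, closed_pre1_inter φ hcl⟩⟩⟩,
    ⟨h12', h12'.trans ⟨h23', fun hcl => ⟨_, closed_pre0_inter φ hcl⟩⟩⟩⟩

end CanExt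
end

section
/- (Canonical extension) Let L be a bounded lattice and X = D♭(L) = (MPH(L,2_B), E). Then the complete lattice C(X) = MPE(X,2), ordered by φ ≤ ψ iff φ⁻¹(1) ⊆ ψ⁻¹(1), together with the embedding e : L → C(X), a ↦ e_a, is a canonical extension of L: it is a completion of L that is both dense and compact. -/
namespace CanExt

open Classical

namespace Aux

variable {X : Type*}

def rset (E : X → X → Prop) (A : Set X) : Set X := {y | ∀ x ∈ A, ¬ E x y}
def lset (E : X → X → Prop) (B : Set X) : Set X := {x | ∀ y ∈ B, ¬ E x y}

lemma subset_lr (E : X → X → Prop) (A : Set X) : A ⊆ lset E (rset E A) :=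
  fun x hx y hy => hy x hx
lemma subset_rl (E : X → X → Prop) (B : Set X) : B ⊆ rset E (lset E B) :=
  fun y hy x hx => hx y hy
lemma lset_anti {E : X → X → Prop} {B B' : Set X} (h : B ⊆ B') : lset E B' ⊆ lset E B :=
  fun x hx y hy => hx y (h hy)
lemma rset_anti {E : X → X → Prop} {A A' : Set X} (h : A ⊆ A') : rset E A' ⊆ rset E A :=
  fun y hy x hx => hy x (h hx)

/-- `A` is a stable (Galois-closed) set. -/
def Stable (E : X → X → Prop) (A : Set X) : Prop := lset E (rset E A) = A

lemma cl_mono {E : X → X → Prop} {A A' : Set X} (h : A ⊆ A') :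
    lset E (rset E A) ⊆ lset E (rset E A') := lset_anti (rset_anti h)

lemma stable_lset (E : X → X → Prop) (B : Set X) : Stable E (lset E B) :=
  subset_antisymm (lset_anti (subset_rl E B)) (subset_lr E _)

lemma stable_iInter {ι : Sort*} {E : X → X → Prop} {A : ι → Set X}
    (h : ∀ i, Stable E (A i)) : Stable E (⋂ i, A i) := by
  refine subset_antisymm (fun x hx => Set.mem_iInter.2 fun i => ?_) (subset_lr E _)
  have := cl_mono (E := E) (Set.iInter_subset A i) hx
  rwa [h i] at this

section MPE
variable {E : X → X → Prop}

open Classical in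
/-- The maximal `E`-preserving partial map determined by a stable set. -/
noncomputable def mk (E : X → X → Prop) (A : Set X) : PMap X :=
  fun x => if x ∈ A then some true else if x ∈ rset E A then some false else none

lemma mk_true_iff {A : Set X} {x : X} : mk E A x = some true ↔ x ∈ A := by
  unfold mk; split
  · simp_all
  · split <;> simp_all

lemma mk_false_iff {A : Set X} {x : X} :
    mk E A x = some false ↔ x ∉ A ∧ x ∈ rset E A := by
  unfold mk; split
  · simp_all
  · split <;> simp_all

lemma mk_none_iff {A : Set X} {x : X} :
    mk E A x = none ↔ x ∉ A ∧ x ∉ rset E A := by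
  unfold mk; split
  · simp_all
  · split <;> simp_all

lemma pre1_mk {A : Set X} : pre1 (mk E A) = A := Set.ext fun _ => mk_true_iff

lemma not_mem_rset_self {A : Set X} (hrefl : ∀ x, E x x) (hA : Stable E A) {x : X}
    (h1 : x ∈ A) (h2 : x ∈ rset E A) : False := h2 x h1 (hrefl x)

lemma mk_mem_MPE (hrefl : ∀ x, E x x) {A : Set X} (hA : Stable E A) :
    mk E A ∈ MPE E := by
  constructor
  · intro x y hxy a b hx hy
    cases a <;> cases b <;> try simp
    -- a = true, b = false is the only bad case
    exfalso
    exact (mk_false_iff.1 hy).2 x (mk_true_iff.1 hx) hxy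
  · intro ψ hψ hext
    funext x
    rcases hmx : mk E A x with _ | a
    · rcases hx : ψ x with _ | b
      · rfl
      · exfalso
        rcases mk_none_iff.1 hmx with ⟨hxA, hxR⟩
        cases b
        · -- ψ x = some false, but x ∉ rset E A : ∃ y ∈ A, E y x
          have : ∃ y ∈ A, E y x := by
            by_contra h; push_neg at h; exact hxR fun y hy => h y hy
          rcases this with ⟨y, hyA, hyx⟩
          have h1 : ψ y = some true := hext (mk_true_iff.2 hyA)
          exact absurd (hψ hyx h1 hx) (by decide)
        · -- ψ x = some true, but x ∉ A = lset (rset A) : ∃ y ∈ rset E A, E x y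
          have hxL : x ∉ Aux.lset E (rset E A) := by rw [hA]; exact hxA
          have : ∃ y ∈ rset E A, E x y := by
            by_contra h; push_neg at h; exact hxL fun y hy => h y hy
          rcases this with ⟨y, hyR, hxy⟩
          have hyA : y ∉ A := fun hyA => not_mem_rset_self hrefl hA hyA hyR
          have h1 : ψ y = some false := hext (mk_false_iff.2 ⟨hyA, hyR⟩)
          exact absurd (hψ hxy hx h1) (by decide)
    · exact hext hmx

end MPE

section MPE2
variable {E : X → X → Prop}

lemma pre1_pre0_disjoint {φ : PMap X} {x : X} (h1 : x ∈ pre1 φ) (h0 : x ∈ pre0 φ) : False := by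
  have := h1.symm.trans h0; simp at this

lemma MPE.pre0_eq (hrefl : ∀ x, E x x) {φ : PMap X} (hφ : φ ∈ MPE E) :
    pre0 φ = rset E (pre1 φ) := by
  apply subset_antisymm
  · intro y hy x hx hxy
    exact absurd (hφ.1 hxy hx hy) (by decide)
  · intro y hy
    rcases hyv : φ y with _ | b
    · -- extend φ at y by false
      exfalso
      classical
      set ψ : PMap X := fun x => if x = y then some false else φ x with hψdef
      have hψext : PExt ψ φ := by
        intro x a hx
        by_cases hxy : x = y
        · rw [hxy] at hx; rw [hx] at hyv; exact absurd hyv (by simp)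
        · simp [hψdef, hxy, hx]
      have hψ : EPres E ψ := by
        intro u v huv a b hu hv
        by_cases huy : u = y
        · subst huy
          have : a = false := by simpa [hψdef] using hu
          subst this; exact Bool.false_le _
        · have hu' : φ u = some a := by simpa [hψdef, huy] using hu
          by_cases hvy : v = y
          · subst hvy
            have : b = false := by simpa [hψdef] using hv
            subst this
            cases a
            · exact le_refl _
            · exact absurd huv (hy u hu')
          · exact hφ.1 huv hu' (by simpa [hψdef, hvy] using hv)
      have := hφ.2 ψ hψ hψext
      have : ψ y = φ y := by rw [this]
      simp [hψdef, hyv] at this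
    · cases b
      · exact hyv
      · exact absurd (hrefl y) (hy y hyv)

lemma MPE.stable_pre1 (hrefl : ∀ x, E x x) {φ : PMap X} (hφ : φ ∈ MPE E) :
    Stable E (pre1 φ) := by
  apply subset_antisymm _ (subset_lr E _)
  intro x hx
  rcases hxv : φ x with _ | b
  · -- extend φ at x by true
    exfalso
    classical
    set ψ : PMap X := fun u => if u = x then some true else φ u with hψdef
    have hψext : PExt ψ φ := by
      intro u a hu
      by_cases hux : u = x
      · rw [hux] at hu; rw [hu] at hxv; exact absurd hxv (by simp)
      · simp [hψdef, hux, hu]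
    have hψ : EPres E ψ := by
      intro u v huv a b hu hv
      by_cases hvx : v = x
      · subst hvx
        have : b = true := by simpa [hψdef] using hv
        subst this; exact Bool.le_true _
      · have hv' : φ v = some b := by simpa [hψdef, hvx] using hv
        by_cases hux : u = x
        · subst hux
          have : a = true := by simpa [hψdef] using hu
          subst this
          cases b
          · -- v ∈ pre0 φ = rset (pre1 φ), u = x ∈ lset (rset (pre1 φ))
            exfalso
            have hv0 : v ∈ pre0 φ := hv'
            rw [MPE.pre0_eq hrefl hφ] at hv0
            exact hx v hv0 huv
          · exact le_refl _
        · exact hφ.1 huv (by simpa [hψdef, hux] using hu) hv'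
    have := hφ.2 ψ hψ hψext
    have : ψ x = φ x := by rw [this]
    simp [hψdef, hxv] at this
  · cases b
    · -- φ x = some false : x ∈ pre0 = rset pre1, and x ∈ lset (rset pre1)
      exfalso
      have hx0 : x ∈ pre0 φ := hxv
      rw [MPE.pre0_eq hrefl hφ] at hx0
      exact hx x hx0 (hrefl x)
    · exact hxv

lemma MPE.eq_mk (hrefl : ∀ x, E x x) {φ : PMap X} (hφ : φ ∈ MPE E) :
    φ = mk E (pre1 φ) := by
  funext x
  rcases hx : φ x with _ | b
  · symm
    refine mk_none_iff.2 ⟨?_, ?_⟩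
    · intro h; rw [(h : φ x = some true)] at hx; cases hx
    · rw [← MPE.pre0_eq hrefl hφ]
      intro h; rw [(h : φ x = some false)] at hx; cases hx
  · cases b
    · symm
      refine mk_false_iff.2 ⟨?_, ?_⟩
      · intro h; rw [(h : φ x = some true)] at hx; cases hx
      · rw [← MPE.pre0_eq hrefl hφ]; exact hx
    · exact ((mk_true_iff (A := pre1 φ)).2 hx).symm

end MPE2
end Aux

namespace Aux2
open Aux

variable {L : Type*} [Lattice L] [BoundedOrder L]

open Classical in
noncomputable def pairMap (F I : Set L) : PMap L :=
  fun x => if x ∈ F then some true else if x ∈ I then some false else none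

lemma pairMap_true_iff {F I : Set L} {x : L} : pairMap F I x = some true ↔ x ∈ F := by
  unfold pairMap; split
  · simp_all
  · split <;> simp_all

lemma pairMap_false_iff {F I : Set L} {x : L} :
    pairMap F I x = some false ↔ x ∉ F ∧ x ∈ I := by
  unfold pairMap; split
  · simp_all
  · split <;> simp_all

lemma pairMap_none_iff {F I : Set L} {x : L} :
    pairMap F I x = none ↔ x ∉ F ∧ x ∉ I := by
  unfold pairMap; split
  · simp_all
  · split <;> simp_all

/-- A disjoint filter–ideal pair. -/
def GoodPair (F I : Set L) : Prop :=
  IsLatFilter L F ∧ IsLatIdeal L I ∧ ∀ x, x ∈ F → x ∈ I → False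

lemma GoodPair.top_mem {F I : Set L} (h : GoodPair F I) : ⊤ ∈ F := by
  rcases h.1.1 with ⟨a, ha⟩; exact h.1.2.1 ha le_top

lemma GoodPair.bot_mem {F I : Set L} (h : GoodPair F I) : ⊥ ∈ I := by
  rcases h.2.1.1 with ⟨a, ha⟩; exact h.2.1.2.1 ha bot_le

lemma GoodPair.pairMap_PHom {F I : Set L} (h : GoodPair F I) : PHom L (pairMap F I) := by
  refine ⟨pairMap_false_iff.2 ⟨fun hb => h.2.2 ⊥ hb h.bot_mem, h.bot_mem⟩,
    pairMap_true_iff.2 h.top_mem, ?_⟩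
  intro a b x y ha hb
  cases x <;> cases y
  · -- both false
    rcases pairMap_false_iff.1 ha with ⟨haF, haI⟩
    rcases pairMap_false_iff.1 hb with ⟨hbF, hbI⟩
    constructor
    · exact pairMap_false_iff.2 ⟨fun hf => h.2.2 _ hf (h.2.1.2.1 haI inf_le_left),
        h.2.1.2.1 haI inf_le_left⟩
    · exact pairMap_false_iff.2 ⟨fun hf => h.2.2 _ hf (h.2.1.2.2 haI hbI),
        h.2.1.2.2 haI hbI⟩
  · -- a false, b true
    rcases pairMap_false_iff.1 ha with ⟨haF, haI⟩
    have hbF := pairMap_true_iff.1 hb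
    constructor
    · show pairMap F I (a ⊓ b) = some false
      exact pairMap_false_iff.2 ⟨fun hf => h.2.2 _ hf (h.2.1.2.1 haI inf_le_left),
        h.2.1.2.1 haI inf_le_left⟩
    · show pairMap F I (a ⊔ b) = some true
      exact pairMap_true_iff.2 (h.1.2.1 hbF le_sup_right)
  · -- a true, b false
    have haF := pairMap_true_iff.1 ha
    rcases pairMap_false_iff.1 hb with ⟨hbF, hbI⟩
    constructor
    · show pairMap F I (a ⊓ b) = some false
      exact pairMap_false_iff.2 ⟨fun hf => h.2.2 _ hf (h.2.1.2.1 hbI inf_le_right),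
        h.2.1.2.1 hbI inf_le_right⟩
    · show pairMap F I (a ⊔ b) = some true
      exact pairMap_true_iff.2 (h.1.2.1 haF le_sup_left)
  · -- both true
    have haF := pairMap_true_iff.1 ha
    have hbF := pairMap_true_iff.1 hb
    exact ⟨pairMap_true_iff.2 (h.1.2.2 haF hbF),
      pairMap_true_iff.2 (h.1.2.1 haF le_sup_left)⟩

/-- A maximal disjoint filter–ideal pair. -/
def MaxPair (F I : Set L) : Prop :=
  GoodPair F I ∧ ∀ F' I', GoodPair F' I' → F ⊆ F' → I ⊆ I' → F' = F ∧ I' = I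

/-- Zorn: every disjoint pair extends to a maximal one. -/
lemma exists_maxPair {F I : Set L} (h : GoodPair F I) :
    ∃ F' I', MaxPair F' I' ∧ F ⊆ F' ∧ I ⊆ I' := by
  classical
  let s : Set (Set L × Set L) := {p | GoodPair p.1 p.2}
  have hzorn := zorn_le_nonempty₀ s ?chain (F, I) h
  · rcases hzorn with ⟨m, hm, hms, hmax⟩
    refine ⟨m.1, m.2, ⟨hms, ?_⟩, hm.1, hm.2⟩
    intro F' I' h' hF' hI'
    have := hmax (y := (F', I')) h' ⟨hF', hI'⟩
    exact ⟨subset_antisymm this.1 hF', subset_antisymm this.2 hI'⟩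
  case chain =>
    intro c hcs hchain y hy
    refine ⟨(⋃ p ∈ c, p.1, ⋃ p ∈ c, p.2), ⟨⟨?_, ?_, ?_⟩, ⟨?_, ?_, ?_⟩, ?_⟩, ?_⟩
    · exact ⟨⊤, Set.mem_biUnion hy (hcs hy).top_mem⟩
    · rintro a b ha hab
      rcases Set.mem_iUnion₂.1 ha with ⟨p, hp, hap⟩
      exact Set.mem_biUnion hp ((hcs hp).1.2.1 hap hab)
    · rintro a b ha hb
      rcases Set.mem_iUnion₂.1 ha with ⟨p, hp, hap⟩
      rcases Set.mem_iUnion₂.1 hb with ⟨q, hq, hbq⟩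
      rcases hchain.total hp hq with hpq | hqp
      · exact Set.mem_biUnion hq ((hcs hq).1.2.2 (hpq.1 hap) hbq)
      · exact Set.mem_biUnion hp ((hcs hp).1.2.2 hap (hqp.1 hbq))
    · exact ⟨⊥, Set.mem_biUnion hy (hcs hy).bot_mem⟩
    · rintro a b ha hab
      rcases Set.mem_iUnion₂.1 ha with ⟨p, hp, hap⟩
      exact Set.mem_biUnion hp ((hcs hp).2.1.2.1 hap hab)
    · rintro a b ha hb
      rcases Set.mem_iUnion₂.1 ha with ⟨p, hp, hap⟩
      rcases Set.mem_iUnion₂.1 hb with ⟨q, hq, hbq⟩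
      rcases hchain.total hp hq with hpq | hqp
      · exact Set.mem_biUnion hq ((hcs hq).2.1.2.2 (hpq.2 hap) hbq)
      · exact Set.mem_biUnion hp ((hcs hp).2.1.2.2 hap (hqp.2 hbq))
    · intro x hx1 hx2
      rcases Set.mem_iUnion₂.1 hx1 with ⟨p, hp, hxp⟩
      rcases Set.mem_iUnion₂.1 hx2 with ⟨q, hq, hxq⟩
      rcases hchain.total hp hq with hpq | hqp
      · exact (hcs hq).2.2 x (hpq.1 hxp) hxq
      · exact (hcs hp).2.2 x hxp (hqp.2 hxq)
    · intro p hp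
      exact ⟨fun x hx => Set.mem_biUnion hp hx, fun x hx => Set.mem_biUnion hp hx⟩

lemma some_true_ne_false {o : Option Bool} (h1 : o = some true) (h2 : o = some false) : False := by
  rw [h1] at h2; cases h2

/-- The pair map of a maximal pair is a maximal partial homomorphism. -/
lemma MaxPair.mem_MPHset {F I : Set L} (h : MaxPair F I) : pairMap F I ∈ MPHset L := by
  refine ⟨h.1.pairMap_PHom, ?_⟩
  intro g hg hext
  funext c
  rcases hc : pairMap F I c with _ | b
  · rcases pairMap_none_iff.1 hc with ⟨hcF, hcI⟩
    rcases hgc : g c with _ | b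
    · rfl
    · exfalso
      cases b
      · -- g c = some false : enlarge the ideal by c
        set I' : Set L := {x | ∃ q ∈ I, x ≤ q ⊔ c} with hI'
        have hgood : GoodPair F I' := by
          refine ⟨h.1.1, ⟨⟨⊥, ⊥, h.1.bot_mem, bot_le⟩, ?_, ?_⟩, ?_⟩
          · rintro a b ⟨q, hq, haq⟩ hba; exact ⟨q, hq, hba.trans haq⟩
          · rintro a b ⟨q, hq, haq⟩ ⟨q', hq', hbq'⟩
            exact ⟨q ⊔ q', h.1.2.1.2.2 hq hq', sup_le (haq.trans (sup_le_sup_right le_sup_left c)) (hbq'.trans (sup_le_sup_right le_sup_right c))⟩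
          · rintro x hxF ⟨q, hq, hxq⟩
            -- x ∈ F, x ≤ q ⊔ c : contradiction via g
            have hgx : g x = some true := hext (pairMap_true_iff.2 hxF)
            have hgq : g q = some false :=
              hext (pairMap_false_iff.2 ⟨fun hf => h.1.2.2 q hf hq, hq⟩)
            have hqc : g (q ⊔ c) = some false := by
              have := (hg.2.2 hgq hgc).2
              simpa using this
            have hmeet : g (x ⊓ (q ⊔ c)) = some false := by
              have := (hg.2.2 hgx hqc).1
              simpa using this
            rw [inf_eq_left.2 hxq] at hmeet
            exact some_true_ne_false hgx hmeet
        have := (h.2 F I' hgood subset_rfl (fun x hx => ⟨x, hx, le_sup_left⟩)).2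
        have hcI' : c ∈ I' := ⟨⊥, h.1.bot_mem, by simp⟩
        rw [this] at hcI'
        exact hcI hcI'
      · -- g c = some true : enlarge the filter by c
        set F' : Set L := {x | ∃ p ∈ F, p ⊓ c ≤ x} with hF'
        have hgood : GoodPair F' I := by
          refine ⟨⟨⟨⊤, ⊤, h.1.top_mem, le_top⟩, ?_, ?_⟩, h.1.2.1, ?_⟩
          · rintro a b ⟨p, hp, hpa⟩ hab; exact ⟨p, hp, hpa.trans hab⟩
          · rintro a b ⟨p, hp, hpa⟩ ⟨p', hp', hpb⟩
            refine ⟨p ⊓ p', h.1.1.2.2 hp hp', le_inf (le_trans (inf_le_inf_right _ inf_le_left) hpa) (le_trans (inf_le_inf_right _ inf_le_right) hpb)⟩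
          · rintro x ⟨p, hp, hpx⟩ hxI
            have hgp : g p = some true := hext (pairMap_true_iff.2 hp)
            have hgx : g x = some false :=
              hext (pairMap_false_iff.2 ⟨fun hf => h.1.2.2 x hf hxI, hxI⟩)
            have hpc : g (p ⊓ c) = some true := by
              have := (hg.2.2 hgp hgc).1
              simpa using this
            have : g ((p ⊓ c) ⊔ x) = some true := by
              have := (hg.2.2 hpc hgx).2
              simpa using this
            rw [sup_eq_right.2 hpx] at this
            exact (some_true_ne_false this hgx).elim
        have := (h.2 F' I hgood (fun x hx => ⟨x, hx, inf_le_left⟩) subset_rfl).1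
        have hcF' : c ∈ F' := ⟨⊤, h.1.top_mem, by simp⟩
        rw [this] at hcF'
        exact hcF hcF'
  · exact hext hc

variable (L) in
lemma mph_phom (f : MPHsub L) : PHom L f.1 := f.2.1

/-- The filter generated by `pre1 f` and `b` is disjoint from the ideal
generated by `pre0 f`, provided `a ∈ pre1 f` and `a ≤ b`. -/
lemma mph_up {f : MPHsub L} {a b : L} (ha : f.1 a = some true) (hab : a ≤ b) :
    f.1 b = some true := by
  classical
  have hPH := f.2.1
  set F' : Set L := {x | ∃ p, f.1 p = some true ∧ p ⊓ b ≤ x} with hF'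
  set I' : Set L := {x | ∃ q, f.1 q = some false ∧ x ≤ q} with hI'
  have hdisj : ∀ x, x ∈ F' → x ∈ I' → False := by
    rintro x ⟨p, hp, hpx⟩ ⟨q, hq, hxq⟩
    have h1 : f.1 (p ⊓ a) = some true := by
      have := (hPH.2.2 hp ha).1; simpa using this
    have h2 : f.1 ((p ⊓ a) ⊔ q) = some true := by
      have := (hPH.2.2 h1 hq).2; simpa using this
    have hle : p ⊓ a ≤ q := le_trans (inf_le_inf_left p hab) (hpx.trans hxq)
    rw [sup_eq_right.2 hle] at h2
    exact some_true_ne_false h2 hq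
  have hgood : GoodPair F' I' := by
    refine ⟨⟨⟨⊤, ⊤, hPH.2.1, le_top⟩, ?_, ?_⟩, ⟨⟨⊥, ⊥, hPH.1, le_refl _⟩, ?_, ?_⟩, hdisj⟩
    · rintro u v ⟨p, hp, hpu⟩ huv; exact ⟨p, hp, hpu.trans huv⟩
    · rintro u v ⟨p, hp, hpu⟩ ⟨p', hp', hpv⟩
      refine ⟨p ⊓ p', (hPH.2.2 hp hp').1, le_inf (le_trans (inf_le_inf_right _ inf_le_left) hpu) (le_trans (inf_le_inf_right _ inf_le_right) hpv)⟩
    · rintro u v ⟨q, hq, huq⟩ hvu; exact ⟨q, hq, hvu.trans huq⟩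
    · rintro u v ⟨q, hq, huq⟩ ⟨q', hq', hvq'⟩
      refine ⟨q ⊔ q', (hPH.2.2 hq hq').2, sup_le (huq.trans le_sup_left) (hvq'.trans le_sup_right)⟩
  have hext : PExt (pairMap F' I') f.1 := by
    intro x v hx
    cases v
    · have hxI : x ∈ I' := ⟨x, hx, le_refl x⟩
      exact pairMap_false_iff.2 ⟨fun hf => hdisj x hf hxI, hxI⟩
    · exact pairMap_true_iff.2 ⟨x, hx, inf_le_left⟩
  have heq := f.2.2 _ hgood.pairMap_PHom hext
  have hbF : b ∈ F' := ⟨a, ha, by simp [hab]⟩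
  rw [← heq]
  exact pairMap_true_iff.2 hbF

lemma mph_down {f : MPHsub L} {a b : L} (ha : f.1 a = some false) (hab : b ≤ a) :
    f.1 b = some false := by
  classical
  have hPH := f.2.1
  set F' : Set L := {x | ∃ p, f.1 p = some true ∧ p ≤ x} with hF'
  set I' : Set L := {x | ∃ q, f.1 q = some false ∧ x ≤ q ⊔ b} with hI'
  have hdisj : ∀ x, x ∈ F' → x ∈ I' → False := by
    rintro x ⟨p, hp, hpx⟩ ⟨q, hq, hxq⟩
    have h1 : f.1 (q ⊔ a) = some false := by
      have := (hPH.2.2 hq ha).2; simpa using this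
    have h2 : f.1 (p ⊓ (q ⊔ a)) = some false := by
      have := (hPH.2.2 hp h1).1; simpa using this
    have hle : p ≤ q ⊔ a := hpx.trans (hxq.trans (sup_le_sup_left hab q))
    rw [inf_eq_left.2 hle] at h2
    exact some_true_ne_false hp h2
  have hgood : GoodPair F' I' := by
    refine ⟨⟨⟨⊤, ⊤, hPH.2.1, le_refl _⟩, ?_, ?_⟩, ⟨⟨⊥, ⊥, hPH.1, bot_le⟩, ?_, ?_⟩, hdisj⟩
    · rintro u v ⟨p, hp, hpu⟩ huv; exact ⟨p, hp, hpu.trans huv⟩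
    · rintro u v ⟨p, hp, hpu⟩ ⟨p', hp', hpv⟩
      exact ⟨p ⊓ p', (hPH.2.2 hp hp').1, le_inf (inf_le_left.trans hpu) (inf_le_right.trans hpv)⟩
    · rintro u v ⟨q, hq, huq⟩ hvu; exact ⟨q, hq, hvu.trans huq⟩
    · rintro u v ⟨q, hq, huq⟩ ⟨q', hq', hvq'⟩
      refine ⟨q ⊔ q', (hPH.2.2 hq hq').2, sup_le (huq.trans ?_) (hvq'.trans ?_)⟩
      · exact sup_le_sup_right le_sup_left b
      · exact sup_le_sup_right le_sup_right b
  have hext : PExt (pairMap F' I') f.1 := by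
    intro x v hx
    cases v
    · have hxI : x ∈ I' := ⟨x, hx, le_sup_left⟩
      exact pairMap_false_iff.2 ⟨fun hf => hdisj x hf hxI, hxI⟩
    · exact pairMap_true_iff.2 ⟨x, hx, le_refl x⟩
  have heq := f.2.2 _ hgood.pairMap_PHom hext
  have hbI : b ∈ I' := ⟨a, ha, by simp [hab.trans le_sup_left]⟩
  rw [← heq]
  exact pairMap_false_iff.2 ⟨fun hf => hdisj b hf hbI, hbI⟩

lemma mph_maxPair (f : MPHsub L) : MaxPair (pre1 f.1) (pre0 f.1) := by
  have hPH := f.2.1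
  have hdisj : ∀ x, x ∈ pre1 f.1 → x ∈ pre0 f.1 → False := fun x h1 h0 =>
    some_true_ne_false h1 h0
  have hgood : GoodPair (pre1 f.1) (pre0 f.1) := by
    refine ⟨⟨⟨⊤, hPH.2.1⟩, ?_, ?_⟩, ⟨⟨⊥, hPH.1⟩, ?_, ?_⟩, hdisj⟩
    · exact fun a b ha hab => mph_up ha hab
    · exact fun a b ha hb => (hPH.2.2 ha hb).1
    · exact fun a b ha hba => mph_down ha hba
    · exact fun a b ha hb => (hPH.2.2 ha hb).2
  refine ⟨hgood, ?_⟩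
  intro F' I' h' hF hI
  have hdisj' := h'.2.2
  have hext : PExt (pairMap F' I') f.1 := by
    intro x v hx
    cases v
    · have hxI : x ∈ I' := hI hx
      exact pairMap_false_iff.2 ⟨fun hf => hdisj' x hf hxI, hxI⟩
    · exact pairMap_true_iff.2 (hF hx)
  have heq := f.2.2 _ h'.pairMap_PHom hext
  constructor
  · ext x; rw [← heq] at *
    constructor
    · intro hx; exact pairMap_true_iff.2 hx
    · intro hx; exact pairMap_true_iff.1 hx
  · ext x
    constructor
    · intro hx
      have : pairMap F' I' x = some false :=
        pairMap_false_iff.2 ⟨fun hf => hdisj' x hf hx, hx⟩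
      rw [heq] at this; exact this
    · intro hx
      have : pairMap F' I' x = some false := by rw [heq]; exact hx
      exact (pairMap_false_iff.1 this).2

end Aux2


namespace Aux3
open Aux Aux2

variable {L : Type*} [Lattice L] [BoundedOrder L]

lemma EM_refl (f : MPHsub L) : EM L f f := by
  intro x a b h1 h2; rw [h1] at h2; cases h2; exact le_refl _

lemma not_erelP {f g : MPHsub L} (h : ¬ EM L f g) :
    ∃ x, f.1 x = some true ∧ g.1 x = some false := by
  by_contra hc; push_neg at hc
  apply h; intro x a b h1 h2
  cases a
  · exact Bool.false_le _
  · cases b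
    · exact absurd h2 (hc x h1)
    · exact le_refl _

lemma exists_false_ext (f : MPHsub L) {a : L} (ha : f.1 a = none) :
    ∃ h : MPHsub L, h.1 a = some false ∧ EM L f h := by
  have hgoodf := (mph_maxPair f).1
  have hgood : GoodPair (pre1 f.1) (Set.Iic a) := by
    refine ⟨hgoodf.1, ⟨⟨a, le_refl a⟩, fun u v hu hvu => hvu.trans hu,
      fun u v hu hv => sup_le hu hv⟩, ?_⟩
    intro x hx hxa
    have := mph_up hx hxa
    rw [ha] at this; cases this
  rcases exists_maxPair hgood with ⟨F, I, hmax, hF, hI⟩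
  refine ⟨⟨pairMap F I, hmax.mem_MPHset⟩, ?_, ?_⟩
  · exact pairMap_false_iff.2 ⟨fun hf => hmax.1.2.2 a hf (hI (le_refl a)), hI (le_refl a)⟩
  · intro x u v h1 h2
    cases u
    · exact Bool.false_le _
    · cases v
      · exfalso
        have hxF : x ∈ F := hF h1
        exact (pairMap_false_iff.1 h2).1 hxF
      · exact le_refl _

lemma exists_true_ext (f : MPHsub L) {a : L} (ha : f.1 a = none) :
    ∃ h : MPHsub L, h.1 a = some true ∧ EM L h f := by
  have hgoodf := (mph_maxPair f).1
  have hgood : GoodPair (Set.Ici a) (pre0 f.1) := by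
    refine ⟨⟨⟨a, le_refl a⟩, fun u v hu huv => hu.trans huv,
      fun u v hu hv => le_inf hu hv⟩, hgoodf.2.1, ?_⟩
    intro x hx hxI
    have := mph_down hxI hx
    rw [ha] at this; cases this
  rcases exists_maxPair hgood with ⟨F, I, hmax, hF, hI⟩
  refine ⟨⟨pairMap F I, hmax.mem_MPHset⟩, ?_, ?_⟩
  · exact pairMap_true_iff.2 (hF (le_refl a))
  · intro x u v h1 h2
    cases u
    · exact Bool.false_le _
    · cases v
      · exfalso
        have hxF : x ∈ F := pairMap_true_iff.1 h1
        exact hmax.1.2.2 x hxF (hI h2)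
      · exact le_refl _

lemma exists_sep {a b : L} (h : ¬ a ≤ b) :
    ∃ f : MPHsub L, f.1 a = some true ∧ f.1 b = some false := by
  have hgood : GoodPair (Set.Ici a) (Set.Iic b) := by
    refine ⟨⟨⟨a, le_refl a⟩, fun u v hu huv => hu.trans huv,
      fun u v hu hv => le_inf hu hv⟩,
      ⟨⟨b, le_refl b⟩, fun u v hu hvu => hvu.trans hu,
      fun u v hu hv => sup_le hu hv⟩, ?_⟩
    intro x hx hxb
    exact h (hx.trans hxb)
  rcases exists_maxPair hgood with ⟨F, I, hmax, hF, hI⟩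
  refine ⟨⟨pairMap F I, hmax.mem_MPHset⟩, pairMap_true_iff.2 (hF (le_refl a)), ?_⟩
  exact pairMap_false_iff.2
    ⟨fun hf => hmax.1.2.2 b hf (hI (le_refl b)), hI (le_refl b)⟩

lemma evalM_mem (a : L) : evalM L a ∈ MPE (EM L) := by
  constructor
  · intro f g hfg u v h1 h2
    exact hfg h1 h2
  · intro ψ hψ hext
    funext f
    rcases hv : evalM L a f with _ | b
    · have hfa : f.1 a = none := hv
      rcases hψf : ψ f with _ | c
      · rfl
      · exfalso
        cases c
        · rcases exists_true_ext f hfa with ⟨h, hha, hEM⟩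
          have hh : ψ h = some true := hext (show evalM L a h = some true from hha)
          exact absurd (hψ hEM hh hψf) (by decide)
        · rcases exists_false_ext f hfa with ⟨h, hha, hEM⟩
          have hh : ψ h = some false := hext (show evalM L a h = some false from hha)
          exact absurd (hψ hEM hψf hh) (by decide)
    · exact hext hv

variable (L)

noncomputable instance instPO : PartialOrder (CX L) where
  le φ ψ := pre1 φ.1 ⊆ pre1 ψ.1
  le_refl _ := subset_rfl
  le_trans _ _ _ h1 h2 := fun x hx => h2 (h1 hx)
  le_antisymm φ ψ h1 h2 := by
    apply Subtype.ext
    rw [MPE.eq_mk EM_refl φ.2, MPE.eq_mk EM_refl ψ.2, subset_antisymm h1 h2]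

noncomputable instance instLECX : LE (CX L) := (instPO L).toLE

noncomputable instance instInf : InfSet (CX L) :=
  ⟨fun S => ⟨mk (EM L) (⋂ φ ∈ S, pre1 (φ : CX L).1),
    mk_mem_MPE EM_refl (stable_iInter fun φ =>
      stable_iInter fun _ => MPE.stable_pre1 EM_refl φ.2)⟩⟩

lemma pre1_sInf (S : Set (CX L)) : pre1 (sInf S).1 = ⋂ φ ∈ S, pre1 (φ : CX L).1 := pre1_mk

noncomputable instance instCL : CompleteLattice (CX L) :=
  completeLatticeOfInf _ (fun S => by
    constructor
    · intro φ hφ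
      show pre1 (sInf S).1 ⊆ pre1 φ.1
      rw [pre1_sInf]
      exact Set.biInter_subset_of_mem hφ
    · intro ψ hψ
      show pre1 ψ.1 ⊆ pre1 (sInf S).1
      rw [pre1_sInf]
      exact Set.subset_iInter₂ fun φ hφ => hψ hφ)

variable {L}

lemma le_iff {φ ψ : CX L} : φ ≤ ψ ↔ pre1 φ.1 ⊆ pre1 ψ.1 := Iff.rfl

lemma stable_pre1CX (φ : CX L) : Stable (EM L) (pre1 φ.1) := MPE.stable_pre1 EM_refl φ.2

lemma sSup_def (S : Set (CX L)) : sSup S = sInf (upperBounds S) := rfl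

lemma pre1_sSup (S : Set (CX L)) :
    pre1 (sSup S).1 = lset (EM L) (rset (EM L) (⋃ φ ∈ S, pre1 (φ : CX L).1)) := by
  rw [sSup_def, pre1_sInf]
  apply subset_antisymm
  · set U := ⋃ φ ∈ S, pre1 (φ : CX L).1 with hU
    have hstable : Stable (EM L) (lset (EM L) (rset (EM L) U)) := stable_lset _ _
    set c : CX L := ⟨mk (EM L) (lset (EM L) (rset (EM L) U)), mk_mem_MPE EM_refl hstable⟩
      with hc
    have hcub : c ∈ upperBounds S := by
      intro φ hφ
      refine le_iff.2 ?_
      have h1 : pre1 c.1 = lset (EM L) (rset (EM L) U) := pre1_mk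
      rw [h1]
      exact (Set.subset_iUnion₂ (s := fun (φ : CX L) (_ : φ ∈ S) => pre1 φ.1) φ hφ).trans
        (subset_lr _ _)
    intro x hx
    have := Set.mem_iInter₂.1 hx c hcub
    rwa [show pre1 c.1 = lset (EM L) (rset (EM L) U) from pre1_mk] at this
  · intro x hx
    refine Set.mem_iInter₂.2 fun ψ hψ => ?_
    have hUsub : (⋃ φ ∈ S, pre1 (φ : CX L).1) ⊆ pre1 ψ.1 :=
      Set.iUnion₂_subset fun φ hφ => le_iff.1 (hψ hφ)
    exact (stable_pre1CX ψ ▸ cl_mono hUsub) hx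

/-- The canonical embedding. -/
noncomputable def eCX (a : L) : CX L := ⟨evalM L a, evalM_mem a⟩

lemma pre1_eCX (a : L) : pre1 (eCX (L := L) a).1 = WaM L a := rfl

lemma rset_false {a : L} {C : Set (MPHsub L)} (hC : WaM L a ⊆ C) {h : MPHsub L}
    (hh : h ∈ rset (EM L) C) : h.1 a = some false := by
  rcases hv : h.1 a with _ | b
  · rcases exists_true_ext h hv with ⟨g, hga, hEM⟩
    exact absurd hEM (hh g (hC hga))
  · cases b
    · rfl
    · exact absurd (EM_refl h) (hh h (hC hv))

lemma finsetInf_true (f : MPHsub L) (S : Finset L) (h : ∀ a ∈ S, f.1 a = some true) :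
    f.1 (S.inf id) = some true := by
  classical
  induction S using Finset.induction_on with
  | empty => simpa using f.2.1.2.1
  | insert c T hx ih =>
    rw [Finset.inf_insert]
    have h1 : f.1 c = some true := h c (Finset.mem_insert_self c T)
    have h2 : f.1 (T.inf id) = some true := ih fun a ha => h a (Finset.mem_insert_of_mem ha)
    have := (f.2.1.2.2 h1 h2).1
    simpa using this

lemma finsetSup_false (f : MPHsub L) (S : Finset L) (h : ∀ a ∈ S, f.1 a = some false) :
    f.1 (S.sup id) = some false := by
  classical
  induction S using Finset.induction_on with
  | empty => simpa using f.2.1.1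
  | insert c T hx ih =>
    rw [Finset.sup_insert]
    have h1 : f.1 c = some false := h c (Finset.mem_insert_self c T)
    have h2 : f.1 (T.sup id) = some false := ih fun a ha => h a (Finset.mem_insert_of_mem ha)
    have := (f.2.1.2.2 h1 h2).2
    simpa using this

lemma W_finsetSup_subset {S : Finset L} {C : Set (MPHsub L)} (hC : Stable (EM L) C)
    (h : ∀ b ∈ S, WaM L b ⊆ C) : WaM L (S.sup id) ⊆ C := by
  intro f hf
  rw [← hC]
  intro h' hh'
  have hfalse : h'.1 (S.sup id) = some false :=
    finsetSup_false h' S fun b hb => rset_false (h b hb) hh'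
  intro hEM
  exact absurd (hEM hf hfalse) (by decide)

lemma W_sup_subset {a b : L} {C : Set (MPHsub L)} (hC : Stable (EM L) C)
    (ha : WaM L a ⊆ C) (hb : WaM L b ⊆ C) : WaM L (a ⊔ b) ⊆ C := by
  classical
  have h := W_finsetSup_subset (S := {a, b}) hC ?_
  · have : ({a, b} : Finset L).sup id = a ⊔ b := by
      simp [Finset.sup_insert, Finset.sup_singleton]
    rwa [this] at h
  · intro c hc
    rcases Finset.mem_insert.1 hc with rfl | hc
    · exact ha
    · rw [Finset.mem_singleton.1 hc]; exact hb

lemma W_inf (a b : L) : WaM L (a ⊓ b) = WaM L a ∩ WaM L b := by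
  ext f
  constructor
  · intro hf
    exact ⟨mph_up hf inf_le_left, mph_up hf inf_le_right⟩
  · rintro ⟨h1, h2⟩
    exact (f.2.1.2.2 h1 h2).1

lemma W_top : WaM L ⊤ = Set.univ := Set.eq_univ_of_forall fun f => f.2.1.2.1

lemma W_bot : WaM L ⊥ = (∅ : Set (MPHsub L)) := by
  ext f
  simp only [Set.mem_empty_iff_false, iff_false]
  intro hf
  exact some_true_ne_false hf f.2.1.1

end Aux3

/-- **Canonical extension.** Let `L` be a bounded lattice and
`X = D♭(L)`. The complete lattice `C(X) = MPE(X,2)`, ordered by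
`φ ≤ ψ ↔ φ⁻¹(1) ⊆ ψ⁻¹(1)`, together with the embedding `a ↦ e_a`, is a
canonical extension of `L`: a completion of `L` that is dense and compact. -/
theorem stmt_11 (L : Type*) [Lattice L] [BoundedOrder L] :
    ∃ inst : CompleteLattice (CX L),
      (∀ φ ψ : CX L, inst.le φ ψ ↔ pre1 φ.1 ⊆ pre1 ψ.1) ∧
      ∃ e : L → CX L,
        (∀ a : L, (e a).1 = evalM L a) ∧
        Function.Injective e ∧
        (∀ a b : L, e (a ⊓ b) = inst.inf (e a) (e b)) ∧
        (∀ a b : L, e (a ⊔ b) = inst.sup (e a) (e b)) ∧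
        e ⊤ = inst.top ∧ e ⊥ = inst.bot ∧
        (∀ φ : CX L,
          φ = inst.sSup {ψ : CX L | (∃ S : Set L, ψ = inst.sInf (e '' S)) ∧ inst.le ψ φ} ∧
          φ = inst.sInf {ψ : CX L | (∃ S : Set L, ψ = inst.sSup (e '' S)) ∧ inst.le φ ψ}) ∧
        (∀ A B : Set L,
          inst.le (inst.sInf (e '' A)) (inst.sSup (e '' B)) →
          ∃ A' B' : Finset L, ↑A' ⊆ A ∧ ↑B' ⊆ B ∧
            inst.le (inst.sInf (e '' ↑A')) (inst.sSup (e '' ↑B'))) := by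
  classical
  refine ⟨Aux3.instCL L, fun φ ψ => Iff.rfl, Aux3.eCX, fun a => rfl, ?_, ?_, ?_, ?_, ?_, ?_, ?_⟩
  · -- injectivity
    have key : ∀ x y : L, ¬ x ≤ y → Aux3.eCX (L := L) x ≠ Aux3.eCX y := by
      intro x y hxy hEq
      rcases Aux3.exists_sep hxy with ⟨f, hfx, hfy⟩
      have h1 : (Aux3.eCX (L := L) x).1 f = (Aux3.eCX (L := L) y).1 f := by rw [hEq]
      rw [show (Aux3.eCX (L := L) x).1 f = f.1 x from rfl,
        show (Aux3.eCX (L := L) y).1 f = f.1 y from rfl, hfx, hfy] at h1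
      cases h1
    intro a b hab
    by_contra hne
    have h2 : ¬ a ≤ b ∨ ¬ b ≤ a := by
      by_contra h; push_neg at h; exact hne (le_antisymm h.1 h.2)
    rcases h2 with h2 | h2
    · exact key a b h2 hab
    · exact key b a h2 hab.symm
  · -- meets
    intro a b
    show Aux3.eCX (a ⊓ b) = Aux3.eCX a ⊓ Aux3.eCX b
    apply le_antisymm
    · refine le_inf (Aux3.le_iff.2 ?_) (Aux3.le_iff.2 ?_)
      · exact fun f hf => Aux2.mph_up hf inf_le_left
      · exact fun f hf => Aux2.mph_up hf inf_le_right
    · refine Aux3.le_iff.2 ?_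
      intro f hf
      have h1 : f ∈ pre1 (Aux3.eCX (L := L) a).1 :=
        Aux3.le_iff.1 (inf_le_left (a := Aux3.eCX (L := L) a) (b := Aux3.eCX b)) hf
      have h2 : f ∈ pre1 (Aux3.eCX (L := L) b).1 :=
        Aux3.le_iff.1 (inf_le_right (a := Aux3.eCX (L := L) a) (b := Aux3.eCX b)) hf
      exact (f.2.1.2.2 h1 h2).1
  · -- joins
    intro a b
    show Aux3.eCX (a ⊔ b) = Aux3.eCX a ⊔ Aux3.eCX b
    apply le_antisymm
    · refine Aux3.le_iff.2 ?_
      refine Aux3.W_sup_subset (Aux3.stable_pre1CX (Aux3.eCX a ⊔ Aux3.eCX b)) ?_ ?_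
      · exact Aux3.le_iff.1 (le_sup_left (a := Aux3.eCX (L := L) a) (b := Aux3.eCX b))
      · exact Aux3.le_iff.1 (le_sup_right (a := Aux3.eCX (L := L) a) (b := Aux3.eCX b))
    · refine sup_le (Aux3.le_iff.2 ?_) (Aux3.le_iff.2 ?_)
      · exact fun f hf => Aux2.mph_up hf le_sup_left
      · exact fun f hf => Aux2.mph_up hf le_sup_right
  · -- top
    show Aux3.eCX ⊤ = (⊤ : CX L)
    apply le_antisymm le_top
    exact Aux3.le_iff.2 fun f _ => f.2.1.2.1
  · -- bot
    show Aux3.eCX ⊥ = (⊥ : CX L)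
    apply le_antisymm _ bot_le
    exact Aux3.le_iff.2 fun f hf => (Aux2.some_true_ne_false hf f.2.1.1).elim
  · -- density
    intro φ
    constructor
    · -- join-density
      set T : Set (CX L) :=
        {ψ | (∃ S : Set L, ψ = sInf (Aux3.eCX '' S)) ∧ ψ ≤ φ} with hT
      show φ = sSup T
      apply le_antisymm
      · refine Aux3.le_iff.2 ?_
        intro f hf
        set Sf : Set L := {a | f.1 a = some true} with hSf
        set ψf : CX L := sInf (Aux3.eCX '' Sf) with hψf
        have hpre : pre1 ψf.1 = ⋂ χ ∈ Aux3.eCX '' Sf, pre1 (χ : CX L).1 :=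
          Aux3.pre1_sInf L _
        have hψφ : ψf ≤ φ := by
          refine Aux3.le_iff.2 ?_
          intro g hg
          rw [← Aux3.stable_pre1CX φ]
          intro h' hh' hEM
          rcases Aux3.not_erelP (hh' f hf) with ⟨c, hfc, hh'c⟩
          have hgc : g ∈ pre1 (Aux3.eCX (L := L) c).1 := by
            rw [hpre] at hg
            exact Set.mem_iInter₂.1 hg _ ⟨c, hfc, rfl⟩
          exact absurd (hEM (show g.1 c = some true from hgc) hh'c) (by decide)
        have hfψ : f ∈ pre1 ψf.1 := by
          rw [hpre]
          refine Set.mem_iInter₂.2 ?_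
          rintro χ ⟨c, hc, rfl⟩
          exact hc
        have hmem : ψf ∈ T := ⟨⟨Sf, rfl⟩, hψφ⟩
        exact Aux3.le_iff.1 (le_sSup hmem) hfψ
      · exact sSup_le fun ψ hψ => hψ.2
    · -- meet-density
      set T : Set (CX L) :=
        {ψ | (∃ S : Set L, ψ = sSup (Aux3.eCX '' S)) ∧ φ ≤ ψ} with hT
      show φ = sInf T
      apply le_antisymm (le_sInf fun ψ hψ => hψ.2)
      refine Aux3.le_iff.2 ?_
      intro g hg
      rw [← Aux3.stable_pre1CX φ]
      intro h' hh' hEM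
      set Sh : Set L := {a | h'.1 a = some false} with hSh
      set ψh : CX L := sSup (Aux3.eCX '' Sh) with hψh
      have hpre : pre1 ψh.1 =
          Aux.lset (EM L) (Aux.rset (EM L) (⋃ χ ∈ Aux3.eCX '' Sh, pre1 (χ : CX L).1)) :=
        Aux3.pre1_sSup _
      have hφψ : φ ≤ ψh := by
        refine Aux3.le_iff.2 ?_
        intro f hf
        rcases Aux3.not_erelP (hh' f hf) with ⟨c, hfc, hh'c⟩
        rw [hpre]
        refine Aux.subset_lr _ _ ?_
        exact Set.mem_iUnion₂.2 ⟨Aux3.eCX c, ⟨c, hh'c, rfl⟩, hfc⟩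
      have hgψ : g ∈ pre1 ψh.1 := by
        rw [Aux3.pre1_sInf] at hg
        exact Set.mem_iInter₂.1 hg ψh ⟨⟨Sh, rfl⟩, hφψ⟩
      have hh'r : h' ∈ Aux.rset (EM L) (⋃ χ ∈ Aux3.eCX '' Sh, pre1 (χ : CX L).1) := by
        intro x hx hEMx
        rcases Set.mem_iUnion₂.1 hx with ⟨χ, ⟨c, hc, rfl⟩, hxc⟩
        exact absurd (hEMx (show x.1 c = some true from hxc) hc) (by decide)
      rw [hpre] at hgψ
      exact hgψ h' hh'r hEM
  · -- compactness
    intro A B hle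
    by_contra hcon
    push_neg at hcon
    set F0 : Set L := {x | ∃ A' : Finset L, ↑A' ⊆ A ∧ A'.inf id ≤ x} with hF0
    set I0 : Set L := {x | ∃ B' : Finset L, ↑B' ⊆ B ∧ x ≤ B'.sup id} with hI0
    have hdisj : ∀ x, x ∈ F0 → x ∈ I0 → False := by
      rintro x ⟨A', hA'sub, hA'le⟩ ⟨B', hB'sub, hB'le⟩
      refine hcon A' B' hA'sub hB'sub ?_
      show sInf (Aux3.eCX '' (A' : Set L)) ≤ sSup (Aux3.eCX '' (B' : Set L))
      refine Aux3.le_iff.2 ?_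
      intro f hf
      have hftrue : ∀ a ∈ A', f.1 a = some true := by
        intro a ha
        rw [Aux3.pre1_sInf] at hf
        exact Set.mem_iInter₂.1 hf (Aux3.eCX a) ⟨a, ha, rfl⟩
      have h1 : f.1 (A'.inf id) = some true := Aux3.finsetInf_true f A' hftrue
      have h2 : f.1 (B'.sup id) = some true := Aux2.mph_up h1 (hA'le.trans hB'le)
      have h3 : WaM L (B'.sup id) ⊆ pre1 (sSup (Aux3.eCX '' (B' : Set L))).1 := by
        refine Aux3.W_finsetSup_subset (Aux3.stable_pre1CX _) ?_
        intro b hb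
        have hb' : Aux3.eCX (L := L) b ≤ sSup (Aux3.eCX '' (B' : Set L)) :=
          le_sSup (Set.mem_image_of_mem _ (Finset.mem_coe.2 hb))
        exact Aux3.le_iff.1 hb'
      exact h3 h2
    have hgood : Aux2.GoodPair F0 I0 := by
      refine ⟨⟨⟨⊤, ∅, by simp, by simp⟩, ?_, ?_⟩, ⟨⟨⊥, ∅, by simp, by simp⟩, ?_, ?_⟩, hdisj⟩
      · rintro u v ⟨A', hs, hl⟩ huv; exact ⟨A', hs, hl.trans huv⟩
      · rintro u v ⟨A', hs, hl⟩ ⟨A'', hs', hl'⟩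
        refine ⟨A' ∪ A'', ?_, le_inf ?_ ?_⟩
        · rw [Finset.coe_union]; exact Set.union_subset hs hs'
        · exact (Finset.inf_mono Finset.subset_union_left).trans hl
        · exact (Finset.inf_mono Finset.subset_union_right).trans hl'
      · rintro u v ⟨B', hs, hl⟩ hvu; exact ⟨B', hs, hvu.trans hl⟩
      · rintro u v ⟨B', hs, hl⟩ ⟨B'', hs', hl'⟩
        refine ⟨B' ∪ B'', ?_, sup_le ?_ ?_⟩
        · rw [Finset.coe_union]; exact Set.union_subset hs hs'
        · exact hl.trans (Finset.sup_mono Finset.subset_union_left)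
        · exact hl'.trans (Finset.sup_mono Finset.subset_union_right)
    rcases Aux2.exists_maxPair hgood with ⟨F, I, hmax, hF, hI⟩
    set f : MPHsub L := ⟨Aux2.pairMap F I, hmax.mem_MPHset⟩ with hfdef
    have hfA : ∀ a ∈ A, f.1 a = some true := by
      intro a ha
      refine Aux2.pairMap_true_iff.2 (hF ⟨{a}, ?_, by simp⟩)
      simpa using ha
    have hfB : ∀ b ∈ B, f.1 b = some false := by
      intro b hb
      have hbI : b ∈ I := hI ⟨{b}, by simpa using hb, by simp⟩
      exact Aux2.pairMap_false_iff.2 ⟨fun hf' => hmax.1.2.2 b hf' hbI, hbI⟩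
    have hfInf : f ∈ pre1 (sInf (Aux3.eCX '' A)).1 := by
      rw [Aux3.pre1_sInf]
      refine Set.mem_iInter₂.2 ?_
      rintro χ ⟨a, ha, rfl⟩
      exact hfA a ha
    have hfSup : f ∈ pre1 (sSup (Aux3.eCX '' B)).1 := Aux3.le_iff.1 hle hfInf
    rw [Aux3.pre1_sSup] at hfSup
    have hfr : f ∈ Aux.rset (EM L) (⋃ χ ∈ Aux3.eCX '' B, pre1 (χ : CX L).1) := by
      intro x hx hEMx
      rcases Set.mem_iUnion₂.1 hx with ⟨χ, ⟨b, hb, rfl⟩, hxb⟩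
      exact absurd (hEMx (show x.1 b = some true from hxb) (hfB b hb)) (by decide)
    exact hfSup f hfr (Aux3.EM_refl f)

end CanExt
end

section
/- Let L be a bounded lattice and let f,g ∈ SPH(L,2_B). Then: (i) (f,g) ∈ E if and only if there exists h ∈ SPH(L,2_B) with f ≤₁ h and g ≤₂ h; (ii) f ≤₂ g if and only if there is no h ∈ SPH(L,2_B) with (h,g) ∈ E and (h,f) ∉ E; (iii) f ≤₁ g if and only if there is no h ∈ SPH(L,2_B) with (g,h) ∈ E and (f,h) ∉ E. -/
namespace CanExt

open Classical

section Helpers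

variable {L : Type*} [Lattice L] [BoundedOrder L]

lemma es_iff (f g : SPHsub L) :
    ES L f g ↔ ∀ x, x ∈ pre1 f.1 → x ∉ pre0 g.1 := by
  constructor
  · intro h x hx hx0
    have := h hx hx0
    exact absurd this (by decide)
  · intro h x a b hfa hgb
    cases a
    · exact Bool.false_le b
    · cases b
      · exact absurd hgb (h x hfa)
      · exact le_refl _

lemma mk_sph {F I : Set L} (hF : IsLatFilter L F) (hI : IsLatIdeal L I)
    (hd : ∀ x, x ∈ F → x ∉ I) :
    ∃ h : SPHsub L, pre1 h.1 = F ∧ pre0 h.1 = I := by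
  classical
  set φ : PMap L := fun x => if x ∈ F then some true else if x ∈ I then some false else none
    with hφ
  have h1 : pre1 φ = F := by
    ext x
    by_cases hx : x ∈ F
    · simp [pre1, hφ, hx]
    · by_cases hx' : x ∈ I <;> simp [pre1, hφ, hx, hx']
  have h0 : pre0 φ = I := by
    ext x
    by_cases hx : x ∈ F
    · simp [pre0, hφ, hx, hd x hx]
    · by_cases hx' : x ∈ I <;> simp [pre0, hφ, hx, hx']
  refine ⟨⟨φ, ?_⟩, h1, h0⟩
  refine ⟨h1 ▸ hF, h0 ▸ hI, ?_⟩
  rw [h1, h0, Set.disjoint_left]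
  exact hd

lemma principal_filter (x : L) : IsLatFilter L {y | x ≤ y} :=
  ⟨⟨x, le_refl x⟩, fun a b ha hab => le_trans ha hab, fun a b ha hb => le_inf ha hb⟩

lemma principal_ideal (x : L) : IsLatIdeal L {y | y ≤ x} :=
  ⟨⟨x, le_refl x⟩, fun a b ha hab => le_trans hab ha, fun a b ha hb => sup_le ha hb⟩

end Helpers

/-- Let `L` be a bounded lattice and `f, g ∈ SPH(L,2_B)`.
Then: (i) `(f,g) ∈ E` iff there is `h ∈ SPH(L,2_B)` with `f ≤₁ h` and
`g ≤₂ h`; (ii) `f ≤₂ g` iff there is no `h` with `(h,g) ∈ E` and `(h,f) ∉ E`;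
(iii) `f ≤₁ g` iff there is no `h` with `(g,h) ∈ E` and `(f,h) ∉ E`. -/
theorem stmt_12 (L : Type*) [Lattice L] [BoundedOrder L] (f g : SPHsub L) :
    (ES L f g ↔ ∃ h : SPHsub L, le1 f.1 h.1 ∧ le2 g.1 h.1) ∧
    (le2 f.1 g.1 ↔ ¬ ∃ h : SPHsub L, ES L h g ∧ ¬ ES L h f) ∧
    (le1 f.1 g.1 ↔ ¬ ∃ h : SPHsub L, ES L g h ∧ ¬ ES L f h) := by
  obtain ⟨hf1, hf0, hfd⟩ := f.2
  obtain ⟨hg1, hg0, hgd⟩ := g.2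
  refine ⟨⟨?_, ?_⟩, ⟨?_, ?_⟩, ⟨?_, ?_⟩⟩
  · -- (i) →
    intro hE
    obtain ⟨h, h1, h0⟩ := mk_sph hf1 hg0 ((es_iff f g).mp hE)
    exact ⟨h, le_of_eq h1.symm, le_of_eq h0.symm⟩
  · -- (i) ←
    rintro ⟨h, hle1, hle2⟩
    rw [es_iff]
    intro x hx hx0
    exact Set.disjoint_left.mp h.2.2.2 (hle1 hx) (hle2 hx0)
  · -- (ii) →
    rintro hle ⟨h, hhg, hhf⟩
    refine hhf ((es_iff h f).mpr fun x hx hx0 => ?_)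
    exact (es_iff h g).mp hhg x hx (hle hx0)
  · -- (ii) ←
    intro hno x hx
    by_contra hxg
    refine hno ?_
    obtain ⟨h, h1, h0⟩ := mk_sph (principal_filter x) hg0
      (fun y (hy : x ≤ y) hy0 => hxg (g.2.2.1.2.1 hy0 hy))
    refine ⟨h, (es_iff h g).mpr ?_, fun hEf => ?_⟩
    · intro y hy
      rw [h1] at hy
      exact fun hy0 => hxg (g.2.2.1.2.1 hy0 hy)
    · have hxh : x ∈ pre1 h.1 := h1 ▸ (le_refl x)
      exact (es_iff h f).mp hEf x hxh hx
  · -- (iii) →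
    rintro hle ⟨h, hgh, hfh⟩
    refine hfh ((es_iff f h).mpr fun x hx hx0 => ?_)
    exact (es_iff g h).mp hgh x (hle hx) hx0
  · -- (iii) ←
    intro hno x hx
    by_contra hxg
    refine hno ?_
    obtain ⟨h, h1, h0⟩ := mk_sph hg1 (principal_ideal x)
      (fun y hy (hy0 : y ≤ x) => hxg (g.2.1.2.1 hy hy0))
    refine ⟨h, (es_iff g h).mpr ?_, fun hEf => ?_⟩
    · intro y hy hy0
      rw [h0] at hy0
      exact hxg (g.2.1.2.1 hy hy0)
    · have hxh : x ∈ pre0 h.1 := h0 ▸ (le_refl x)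
      exact (es_iff f h).mp hEf x hx hxh

end CanExt
end

section
/- Let L be a bounded lattice, Y = D̄♭(L) = (SPH(L,2_B), E), φ ∈ MPE(Y,2) and f,g ∈ SPH(L,2_B). Then: (i) if f ≤₂ g and φ(f) = 0, then φ(g) = 0; (ii) if f ≤₁ g and φ(f) = 1, then φ(g) = 1. Further, for every a ∈ L: (iii) if φ⁻¹(0) ∩ W_a = ∅ then φ⁻¹(0) ⊆ V_a; (iv) if φ⁻¹(1) ∩ V_a = ∅ then φ⁻¹(1) ⊆ W_a. -/
namespace CanExt

open Classical

/-- Let `L` be a bounded lattice, `Y = D̄♭(L)` and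
`φ ∈ MPE(Y,2)`. Then: (i) `f ≤₂ g` and `φ(f) = 0` imply `φ(g) = 0`;
(ii) `f ≤₁ g` and `φ(f) = 1` imply `φ(g) = 1`; and for every `a ∈ L`:
(iii) `φ⁻¹(0) ∩ W_a = ∅` implies `φ⁻¹(0) ⊆ V_a`;
(iv) `φ⁻¹(1) ∩ V_a = ∅` implies `φ⁻¹(1) ⊆ W_a`. -/
theorem stmt_13 (L : Type*) [Lattice L] [BoundedOrder L]
    (φ : PMap (SPHsub L)) (hφ : φ ∈ MPE (ES L)) :
    (∀ f g : SPHsub L, le2 f.1 g.1 → φ f = some false → φ g = some false) ∧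
    (∀ f g : SPHsub L, le1 f.1 g.1 → φ f = some true → φ g = some true) ∧
    (∀ a : L, pre0 φ ∩ WaS L a = ∅ → pre0 φ ⊆ VaS L a) ∧
    (∀ a : L, pre1 φ ∩ VaS L a = ∅ → pre1 φ ⊆ WaS L a) := by
  obtain ⟨hpres, hmax⟩ := hφ
  have hrefl : ∀ h : SPHsub L, ES L h h := by
    intro h x a b ha hb
    rw [ha] at hb
    cases Option.some.inj hb
    exact le_refl _
  -- Part (i)
  have part1 : ∀ f g : SPHsub L, le2 f.1 g.1 → φ f = some false → φ g = some false := by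
    intro f g h2 hf
    have key : ∀ h : SPHsub L, ES L h g → φ h = some true → False := by
      intro h hE hh
      have hEf : ES L h f := by
        intro z a b hz hfz
        cases a with
        | false => exact Bool.false_le b
        | true =>
          cases b with
          | true => exact le_refl _
          | false => exact absurd (hE hz (h2 hfz)) (by decide)
      exact absurd (hpres hEf hh hf) (by decide)
    set ψ : PMap (SPHsub L) := fun x => if x = g then some false else φ x with hψ
    have hψpres : EPres (ES L) ψ := by
      intro x y hE a b hx hy
      by_cases hxg : x = g
      · subst hxg
        have ha : a = false := by
          have : some a = some false := by simpa [hψ] using hx.symm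
          exact (Option.some.inj this)
        subst ha
        exact Bool.false_le b
      · have hx' : φ x = some a := by simpa [hψ, hxg] using hx
        by_cases hyg : y = g
        · subst hyg
          cases a with
          | false => exact Bool.false_le b
          | true => exact absurd hx' (fun hc => key x hE hc)
        · have hy' : φ y = some b := by simpa [hψ, hyg] using hy
          exact hpres hE hx' hy'
    have hext : PExt ψ φ := by
      intro x a hx
      by_cases hxg : x = g
      · subst hxg
        have ha : a = false := by
          cases a with
          | false => rfl
          | true => exact absurd hx (fun hc => key _ (hrefl _) hc)
        subst ha
        simp [hψ]
      · simp [hψ, hxg, hx]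
    have hψφ : ψ = φ := hmax ψ hψpres hext
    calc φ g = ψ g := by rw [hψφ]
    _ = some false := by simp [hψ]
  -- Part (ii)
  have part2 : ∀ f g : SPHsub L, le1 f.1 g.1 → φ f = some true → φ g = some true := by
    intro f g h1 hf
    have key : ∀ h : SPHsub L, ES L g h → φ h = some false → False := by
      intro h hE hh
      have hEf : ES L f h := by
        intro z a b hz hfz
        cases a with
        | false => exact Bool.false_le b
        | true =>
          cases b with
          | true => exact le_refl _
          | false => exact absurd (hE (h1 hz) hfz) (by decide)
      exact absurd (hpres hEf hf hh) (by decide)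
    set ψ : PMap (SPHsub L) := fun x => if x = g then some true else φ x with hψ
    have hψpres : EPres (ES L) ψ := by
      intro x y hE a b hx hy
      by_cases hyg : y = g
      · subst hyg
        have hb : b = true := by
          have : some b = some true := by simpa [hψ] using hy.symm
          exact (Option.some.inj this)
        subst hb
        exact Bool.le_true a
      · have hy' : φ y = some b := by simpa [hψ, hyg] using hy
        by_cases hxg : x = g
        · subst hxg
          cases b with
          | true => exact Bool.le_true a
          | false => exact absurd hy' (fun hc => key y hE hc)
        · have hx' : φ x = some a := by simpa [hψ, hxg] using hx
          exact hpres hE hx' hy'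
    have hext : PExt ψ φ := by
      intro x a hx
      by_cases hxg : x = g
      · subst hxg
        have ha : a = true := by
          cases a with
          | true => rfl
          | false => exact absurd hx (fun hc => key _ (hrefl _) hc)
        subst ha
        simp [hψ]
      · simp [hψ, hxg, hx]
    have hψφ : ψ = φ := hmax ψ hψpres hext
    calc φ g = ψ g := by rw [hψφ]
    _ = some true := by simp [hψ]
  refine ⟨part1, part2, ?_, ?_⟩
  -- Part (iii)
  · intro a hdisj f hf
    by_contra hfa
    have hna : ∀ z, a ≤ z → f.1 z ≠ some false := by
      intro z hz hzf
      exact hfa (f.2.2.1.2.1 hzf hz)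
    classical
    set g0 : PMap L := fun z =>
      if a ≤ z then some true else if f.1 z = some false then some false else none with hg0
    have hg0t : ∀ z, g0 z = some true ↔ a ≤ z := by
      intro z
      by_cases h : a ≤ z <;> by_cases h2 : f.1 z = some false <;> simp [hg0, h, h2]
    have hg0f : ∀ z, g0 z = some false ↔ f.1 z = some false := by
      intro z
      by_cases h : a ≤ z
      · simp [hg0, h, hna z h]
      · by_cases h2 : f.1 z = some false <;> simp [hg0, h, h2]
    have hgS : g0 ∈ SPHset L := by
      refine ⟨⟨⟨a, (hg0t a).2 le_rfl⟩, ?_, ?_⟩, ⟨?_, ?_, ?_⟩, ?_⟩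
      · intro x y hx hxy
        exact (hg0t y).2 (le_trans ((hg0t x).1 hx) hxy)
      · intro x y hx hy
        exact (hg0t _).2 (le_inf ((hg0t x).1 hx) ((hg0t y).1 hy))
      · obtain ⟨x, hx⟩ := f.2.2.1.1
        exact ⟨x, (hg0f x).2 hx⟩
      · intro x y hx hxy
        exact (hg0f y).2 (f.2.2.1.2.1 ((hg0f x).1 hx) hxy)
      · intro x y hx hy
        exact (hg0f _).2 (f.2.2.1.2.2 ((hg0f x).1 hx) ((hg0f y).1 hy))
      · rw [Set.disjoint_left]
        intro z hz hz2
        exact hna z ((hg0t z).1 hz) ((hg0f z).1 hz2)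
    set g : SPHsub L := ⟨g0, hgS⟩ with hg
    have hle : le2 f.1 g.1 := fun z hz => (hg0f z).2 hz
    have hg0' : φ g = some false := part1 f g hle hf
    have hW : g ∈ WaS L a := (hg0t a).2 le_rfl
    exact absurd (hdisj ▸ (⟨hg0', hW⟩ : g ∈ pre0 φ ∩ WaS L a)) (Set.notMem_empty g)
  -- Part (iv)
  · intro a hdisj f hf
    by_contra hfa
    have hna : ∀ z, z ≤ a → f.1 z ≠ some true := by
      intro z hz hzf
      exact hfa (f.2.1.2.1 hzf hz)
    classical
    set g0 : PMap L := fun z =>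
      if z ≤ a then some false else if f.1 z = some true then some true else none with hg0
    have hg0f : ∀ z, g0 z = some false ↔ z ≤ a := by
      intro z
      by_cases h : z ≤ a <;> by_cases h2 : f.1 z = some true <;> simp [hg0, h, h2]
    have hg0t : ∀ z, g0 z = some true ↔ f.1 z = some true := by
      intro z
      by_cases h : z ≤ a
      · simp [hg0, h, hna z h]
      · by_cases h2 : f.1 z = some true <;> simp [hg0, h, h2]
    have hgS : g0 ∈ SPHset L := by
      refine ⟨⟨?_, ?_, ?_⟩, ⟨⟨a, (hg0f a).2 le_rfl⟩, ?_, ?_⟩, ?_⟩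
      · obtain ⟨x, hx⟩ := f.2.1.1
        exact ⟨x, (hg0t x).2 hx⟩
      · intro x y hx hxy
        exact (hg0t y).2 (f.2.1.2.1 ((hg0t x).1 hx) hxy)
      · intro x y hx hy
        exact (hg0t _).2 (f.2.1.2.2 ((hg0t x).1 hx) ((hg0t y).1 hy))
      · intro x y hx hxy
        exact (hg0f y).2 (le_trans hxy ((hg0f x).1 hx))
      · intro x y hx hy
        exact (hg0f _).2 (sup_le ((hg0f x).1 hx) ((hg0f y).1 hy))
      · rw [Set.disjoint_left]
        intro z hz hz2
        exact hna z ((hg0f z).1 hz2) ((hg0t z).1 hz)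
    set g : SPHsub L := ⟨g0, hgS⟩ with hg
    have hle : le1 f.1 g.1 := fun z hz => (hg0t z).2 hz
    have hg1' : φ g = some true := part2 f g hle hf
    have hV : g ∈ VaS L a := (hg0f a).2 le_rfl
    exact absurd (hdisj ▸ (⟨hg1', hV⟩ : g ∈ pre1 φ ∩ VaS L a)) (Set.notMem_empty g)

end CanExt
end

section
/- Let L be a bounded lattice and a ∈ L. Then the evaluation map ē_a belongs to MPM(D̄(L),2_τ), i.e. ē_a is a maximal partial morphism from the graph with topology D̄(L) = (SPH(L,2_B), E, τ) to 2_τ; furthermore, regarded as a partial map from D̄♭(L) = (SPH(L,2_B), E) to 2, ē_a belongs to MPE(D̄♭(L),2). -/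
namespace CanExt

open Classical

/-- Let `L` be a bounded lattice and `a ∈ L`. The
evaluation map `ē_a` is a maximal partial morphism from the graph with
topology `D̄(L) = (SPH(L,2_B), E, τ)` to `2_τ`; moreover, regarded as a
partial map from `D̄♭(L)` to `2`, it belongs to `MPE(D̄♭(L),2)`. -/
theorem stmt_14 (L : Type*) [Lattice L] [BoundedOrder L] (a : L) :
    evalS L a ∈ MPM (ES L) (tauS L) ∧ evalS L a ∈ MPE (ES L) := by
  have hE : EPres (ES L) (evalS L a) := by
    intro f g hfg b c hb hc
    exact hfg hb hc
  have hmax : ∀ ψ : PMap (SPHsub L), EPres (ES L) ψ → PExt ψ (evalS L a) → ψ = evalS L a := by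
    intro ψ hψ hext
    funext f
    show ψ f = f.1 a
    cases hfa : f.1 a with
    | some b => exact hext (show evalS L a f = some b from hfa)
    | none =>
      cases hb : ψ f with
      | none => rfl
      | some b =>
        exfalso
        -- facts about f
        have htop : f.1 ⊤ = some true := by
          obtain ⟨⟨u, hu⟩, hup, _⟩ := f.2.1
          exact hup hu le_top
        have hbot : f.1 ⊥ = some false := by
          obtain ⟨⟨u, hu⟩, hdn, _⟩ := f.2.2.1
          exact hdn hu bot_le
        have hane : a ≠ ⊤ := by
          intro h; rw [h, htop] at hfa; exact nomatch hfa
        have hanb : a ≠ ⊥ := by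
          intro h; rw [h, hbot] at hfa; exact nomatch hfa
        cases b with
        | true =>
          set g : PMap L := fun x => if x = ⊤ then some true else
            if x ≤ a then some false else none with hgdef
          have hg1 : ∀ x, g x = some true ↔ x = ⊤ := by
            intro x
            simp only [hgdef]
            split_ifs with h1 h2 <;> simp [h1]
          have hg0 : ∀ x, g x = some false ↔ x ≤ a := by
            intro x
            simp only [hgdef]
            split_ifs with h1 h2
            · simp only [h1]
              constructor
              · intro h; exact absurd h (by simp)
              · intro h; exact absurd (top_le_iff.mp h) hane
            · simp [h2]
            · simp [h2]
          have hgS : g ∈ SPHset L := by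
            refine ⟨⟨⟨⊤, (hg1 ⊤).mpr rfl⟩, ?_, ?_⟩,
                    ⟨⟨a, (hg0 a).mpr le_rfl⟩, ?_, ?_⟩, ?_⟩
            · intro x y hx hxy
              have hx' := (hg1 x).mp hx
              exact (hg1 y).mpr (top_le_iff.mp (hx' ▸ hxy))
            · intro x y hx hy
              have hx' := (hg1 x).mp hx
              have hy' := (hg1 y).mp hy
              exact (hg1 _).mpr (by rw [hx', hy', inf_idem])
            · intro x y hx hxy
              exact (hg0 y).mpr (le_trans hxy ((hg0 x).mp hx))
            · intro x y hx hy
              exact (hg0 _).mpr (sup_le ((hg0 x).mp hx) ((hg0 y).mp hy))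
            · rw [Set.disjoint_left]
              intro x hx hx'
              have h1 := (hg1 x).mp hx
              have h0 := (hg0 x).mp hx'
              exact hane (top_le_iff.mp (h1 ▸ h0))
          have hfg : ES L f ⟨g, hgS⟩ := by
            intro x p q hp hq
            cases q with
            | true => exact Bool.le_true p
            | false =>
              cases p with
              | false => exact le_rfl
              | true =>
                exfalso
                have hxa : x ≤ a := (hg0 x).mp hq
                obtain ⟨_, hup, _⟩ := f.2.1
                have : f.1 a = some true := hup hp hxa
                rw [hfa] at this; exact nomatch this
          have hψg : ψ ⟨g, hgS⟩ = some false :=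
            hext (show evalS L a ⟨g, hgS⟩ = some false from (hg0 a).mpr le_rfl)
          have := hψ hfg hb hψg
          exact absurd this (by simp)
        | false =>
          set g : PMap L := fun x => if x = ⊥ then some false else
            if a ≤ x then some true else none with hgdef
          have hg0 : ∀ x, g x = some false ↔ x = ⊥ := by
            intro x
            simp only [hgdef]
            split_ifs with h1 h2 <;> simp [h1]
          have hg1 : ∀ x, g x = some true ↔ a ≤ x := by
            intro x
            simp only [hgdef]
            split_ifs with h1 h2
            · simp only [h1]
              constructor
              · intro h; exact absurd h (by simp)
              · intro h; exact absurd (le_bot_iff.mp h) hanb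
            · simp [h2]
            · simp [h2]
          have hgS : g ∈ SPHset L := by
            refine ⟨⟨⟨a, (hg1 a).mpr le_rfl⟩, ?_, ?_⟩,
                    ⟨⟨⊥, (hg0 ⊥).mpr rfl⟩, ?_, ?_⟩, ?_⟩
            · intro x y hx hxy
              exact (hg1 y).mpr (le_trans ((hg1 x).mp hx) hxy)
            · intro x y hx hy
              exact (hg1 _).mpr (le_inf ((hg1 x).mp hx) ((hg1 y).mp hy))
            · intro x y hx hxy
              have hx' := (hg0 x).mp hx
              exact (hg0 y).mpr (le_bot_iff.mp (hx' ▸ hxy))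
            · intro x y hx hy
              have hx' := (hg0 x).mp hx
              have hy' := (hg0 y).mp hy
              exact (hg0 _).mpr (by rw [hx', hy', sup_idem])
            · rw [Set.disjoint_left]
              intro x hx hx'
              have h1 := (hg1 x).mp hx
              have h0 := (hg0 x).mp hx'
              exact hanb (le_bot_iff.mp (h0 ▸ h1))
          have hgf : ES L ⟨g, hgS⟩ f := by
            intro x p q hp hq
            cases p with
            | false => exact Bool.false_le q
            | true =>
              cases q with
              | true => exact le_rfl
              | false =>
                exfalso
                have hax : a ≤ x := (hg1 x).mp hp
                obtain ⟨_, hdn, _⟩ := f.2.2.1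
                have : f.1 a = some false := hdn hq hax
                rw [hfa] at this; exact nomatch this
          have hψg : ψ ⟨g, hgS⟩ = some true :=
            hext (show evalS L a ⟨g, hgS⟩ = some true from (hg1 a).mpr le_rfl)
          have := hψ hgf hψg hb
          exact absurd this (by simp)
  have hcl1 : @IsClosed _ (tauS L) (pre1 (evalS L a)) :=
    @IsClosed.mk _ (tauS L) _ (TopologicalSpace.GenerateOpen.basic _ ⟨a, Or.inr rfl⟩)
  have hcl0 : @IsClosed _ (tauS L) (pre0 (evalS L a)) :=
    @IsClosed.mk _ (tauS L) _ (TopologicalSpace.GenerateOpen.basic _ ⟨a, Or.inl rfl⟩)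
  exact ⟨⟨⟨hE, hcl1, hcl0⟩, fun ψ hψ hext => hmax ψ hψ.1 hext⟩, hE, hmax⟩

end CanExt
end
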